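/- arXiv:2007.14566 — 3 statements merged into one kernel-verified Lean document; each statement's English description precedes it below -/
import Mathlib

section
/- Helstrom limit for binary discrimination of orthogonal-replacement channel outputs (Lemma 2): Let φ be a rank-one orthogonal projection (pure state) on ℂ^D and let ρ^⊥ be a density matrix on ℂ^D with φ·ρ^⊥ = 0. For q ∈ [0,1] set σ_q = q·ρ^⊥ + (1−q)·φ. Then for all q0, q1 ∈ [0,1] and u ≥ 1, the Helstrom error probability of the two equiprobable states σ_{q0}^{⊗u} and σ_{q1}^{⊗u} equals f_u(q0,q1). In particular, for u = 1, this equals (1 − |q0 − q1|)/2. -/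
open Matrix BigOperators Finset ComplexOrder

noncomputable section

/-- A density matrix: positive semidefinite with unit trace. -/
def IsDensityMatrix {ι : Type*} [Fintype ι] (ρ : Matrix ι ι ℂ) : Prop :=
  ρ.PosSemidef ∧ ρ.trace = 1

/-- The Helstrom minimum error probability for discriminating the states `ρ n`
with prior probabilities `p n`, optimized over all POVMs. -/
def helstrom {ι : Type*} [Fintype ι] [DecidableEq ι] {m : ℕ}
    (ρ : Fin m → Matrix ι ι ℂ) (p : Fin m → ℝ) : ℝ :=
  1 - sSup { x : ℝ | ∃ M : Fin m → Matrix ι ι ℂ,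
      (∀ n, (M n).PosSemidef) ∧ (∑ n, M n) = 1 ∧
      x = ∑ n, p n * ((M n * ρ n).trace).re }

open Classical in
/-- The positive semidefinite square root (junk value `0` off the PSD cone). -/
def psdSqrt {ι : Type*} [Fintype ι] [DecidableEq ι] (A : Matrix ι ι ℂ) : Matrix ι ι ℂ :=
  if h : A.PosSemidef then
    h.1.eigenvectorUnitary.1 * diagonal ((↑) ∘ (√·) ∘ h.1.eigenvalues) *
      (star h.1.eigenvectorUnitary : Matrix ι ι ℂ) else 0

/-- The trace norm `‖A‖₁ = tr √(Aᴴ A)`. -/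
def traceNorm {ι : Type*} [Fintype ι] [DecidableEq ι] (A : Matrix ι ι ℂ) : ℝ :=
  ((psdSqrt (Aᴴ * A)).trace).re

/-- The `u`-fold Kronecker (tensor) power of a square matrix. -/
def tensorPow {ι : Type*} (σ : Matrix ι ι ℂ) (u : ℕ) :
    Matrix (Fin u → ι) (Fin u → ι) ℂ :=
  fun i j => ∏ k, σ (i k) (j k)

/-- The binary error-probability function `f_u(q0,q1)`. -/
def fErr (u : ℕ) (q0 q1 : ℝ) : ℝ :=
  1/2 - (1/4) * ∑ k ∈ Finset.range (u+1),
    (u.choose k : ℝ) * |q0^k * (1-q0)^(u-k) - q1^k * (1-q1)^(u-k)|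

namespace HelstromAux

variable {D u : ℕ}

/-- Tensor product of a family of `D × D` matrices. -/
def tens (m : Fin u → Matrix (Fin D) (Fin D) ℂ) :
    Matrix (Fin u → Fin D) (Fin u → Fin D) ℂ :=
  fun i j => ∏ k, m k (i k) (j k)

lemma tens_mul (m n : Fin u → Matrix (Fin D) (Fin D) ℂ) :
    tens m * tens n = tens (fun k => m k * n k) := by
  ext i j
  simp only [tens, Matrix.mul_apply]
  rw [Fintype.prod_sum (fun (k : Fin u) (a : Fin D) => m k (i k) a * n k a (j k))]
  exact Finset.sum_congr rfl fun x _ => (Finset.prod_mul_distrib).symm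

lemma tens_trace (m : Fin u → Matrix (Fin D) (Fin D) ℂ) :
    (tens m).trace = ∏ k, (m k).trace := by
  simp only [Matrix.trace, Matrix.diag, tens]
  rw [Fintype.prod_sum (fun (k : Fin u) (a : Fin D) => m k a a)]

lemma tens_conjTranspose (m : Fin u → Matrix (Fin D) (Fin D) ℂ) :
    (tens m)ᴴ = tens (fun k => (m k)ᴴ) := by
  ext i j
  simp [tens, Matrix.conjTranspose_apply, star_prod]

lemma tens_one : tens (fun _ : Fin u => (1 : Matrix (Fin D) (Fin D) ℂ)) = 1 := by
  ext i j
  simp only [tens, Matrix.one_apply]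
  rw [Finset.prod_boole]
  simp [funext_iff]

open scoped MatrixOrder in
lemma tens_psd (m : Fin u → Matrix (Fin D) (Fin D) ℂ) (h : ∀ k, (m k).PosSemidef) :
    (tens m).PosSemidef := by
  choose B hB using fun k => CStarAlgebra.nonneg_iff_eq_star_mul_self.mp (h k).nonneg
  have h1 : ∀ k, (B k)ᴴ * B k = m k := fun k => (hB k).symm
  have : tens m = (tens B)ᴴ * tens B := by
    rw [tens_conjTranspose, tens_mul]
    exact (congrArg tens (funext h1)).symm
  rw [this]
  exact Matrix.posSemidef_conjTranspose_mul_self _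

lemma re_trace_nonneg {ι : Type*} [Fintype ι] [DecidableEq ι] {M : Matrix ι ι ℂ} (h : M.PosSemidef) :
    0 ≤ (M.trace).re := by
  have hdiag : ∀ i, 0 ≤ (M i i).re := by
    intro i
    have := h.re_dotProduct_nonneg (Pi.single i 1)
    simpa [dotProduct, Matrix.mulVec, Pi.single_apply] using this
  simp only [Matrix.trace, Matrix.diag, Complex.re_sum]
  exact Finset.sum_nonneg fun i _ => hdiag i

open scoped MatrixOrder in
lemma re_trace_mul_nonneg {ι : Type*} [Fintype ι] [DecidableEq ι] {A B : Matrix ι ι ℂ}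
    (hA : A.PosSemidef) (hB : B.PosSemidef) : 0 ≤ ((A * B).trace).re := by
  obtain ⟨C, rfl⟩ := CStarAlgebra.nonneg_iff_eq_star_mul_self.mp hB.nonneg
  rw [← Matrix.mul_assoc, Matrix.trace_mul_comm, ← Matrix.mul_assoc]
  exact re_trace_nonneg (hA.mul_mul_conjTranspose_same C)


/-- Projector family indexed by subsets. -/
def QQ (φ : Matrix (Fin D) (Fin D) ℂ) (t : Finset (Fin u)) :
    Matrix (Fin u → Fin D) (Fin u → Fin D) ℂ :=
  tens (fun k => if k ∈ t then 1 - φ else φ)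

/-- State components indexed by subsets. -/
def PP (φ ρp : Matrix (Fin D) (Fin D) ℂ) (t : Finset (Fin u)) :
    Matrix (Fin u → Fin D) (Fin u → Fin D) ℂ :=
  tens (fun k => if k ∈ t then ρp else φ)

/-- Classical weights. -/
def ww (u : ℕ) (q : ℝ) (t : Finset (Fin u)) : ℝ :=
  q ^ t.card * (1 - q) ^ (u - t.card)

lemma ite_prod_split {α : Type*} [CommMonoid α] (t : Finset (Fin u)) (f g : Fin u → α) :
    ∏ k, (if k ∈ t then f k else g k) = (∏ k ∈ t, f k) * ∏ k ∈ tᶜ, g k := by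
  rw [← Finset.prod_mul_prod_compl t fun k => if k ∈ t then f k else g k]
  congr 1
  · exact Finset.prod_congr rfl fun k hk => by rw [if_pos hk]
  · exact Finset.prod_congr rfl fun k hk => by rw [if_neg (Finset.mem_compl.mp hk)]

lemma card_compl_fin (t : Finset (Fin u)) : tᶜ.card = u - t.card := by
  simp [Finset.card_compl]

/-- Expansion of the tensor power into subset components. -/
lemma tensorPow_expand (φ ρp : Matrix (Fin D) (Fin D) ℂ) (q : ℝ) :
    tensorPow ((q:ℂ) • ρp + (((1-q : ℝ)):ℂ) • φ) u
      = ∑ t : Finset (Fin u), ((ww u q t : ℝ) : ℂ) • PP φ ρp t := by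
  ext i j
  rw [Matrix.sum_apply]
  simp only [tensorPow, Matrix.add_apply, Matrix.smul_apply, smul_eq_mul]
  rw [Fintype.prod_add]
  refine Finset.sum_congr rfl fun t _ => ?_
  rw [Finset.prod_mul_distrib, Finset.prod_mul_distrib, Finset.prod_const, Finset.prod_const]
  have hsplit : (PP φ ρp t : Matrix (Fin u → Fin D) (Fin u → Fin D) ℂ) i j
      = (∏ k ∈ t, ρp (i k) (j k)) * ∏ k ∈ tᶜ, φ (i k) (j k) := by
    simp only [PP, tens]
    rw [← ite_prod_split t (fun k => ρp (i k) (j k)) (fun k => φ (i k) (j k))]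
    exact Finset.prod_congr rfl fun k _ => by split <;> rfl
  rw [hsplit, card_compl_fin]
  push_cast [ww]
  ring

/-- Sum of the projectors is the identity. -/
lemma QQ_sum (φ : Matrix (Fin D) (Fin D) ℂ) :
    ∑ t : Finset (Fin u), QQ (D := D) φ t = 1 := by
  ext i j
  rw [Matrix.sum_apply]
  have : ∀ t : Finset (Fin u), QQ (D := D) φ t i j
      = (∏ k ∈ t, (1 - φ) (i k) (j k)) * ∏ k ∈ tᶜ, φ (i k) (j k) := by
    intro t
    simp only [QQ, tens]
    rw [← ite_prod_split t (fun k => (1-φ) (i k) (j k)) (fun k => φ (i k) (j k))]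
    exact Finset.prod_congr rfl fun k _ => by split <;> rfl
  rw [Finset.sum_congr rfl fun t _ => this t, ← Fintype.prod_add]
  have h1 : ∀ k : Fin u, (1 - φ) (i k) (j k) + φ (i k) (j k)
      = (1 : Matrix (Fin D) (Fin D) ℂ) (i k) (j k) := by
    intro k; simp [Matrix.sub_apply]
  rw [Finset.prod_congr rfl fun k _ => h1 k]
  have := congrFun (congrFun (tens_one (u := u) (D := D)) i) j
  simpa [tens] using this


lemma QQ_psd {φ : Matrix (Fin D) (Fin D) ℂ} (hherm : φᴴ = φ) (hproj : φ * φ = φ)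
    (t : Finset (Fin u)) : (QQ (D := D) φ t).PosSemidef := by
  have h1 : (QQ (D := D) φ t)ᴴ = QQ (D := D) φ t := by
    rw [QQ, tens_conjTranspose]
    refine congrArg tens (funext fun k => ?_)
    by_cases hk : k ∈ t <;> simp [hk, hherm]
  have h2 : QQ (D := D) φ t * QQ (D := D) φ t = QQ (D := D) φ t := by
    rw [QQ, tens_mul]
    refine congrArg tens (funext fun k => ?_)
    by_cases hk : k ∈ t
    · simp only [hk, if_true]
      rw [Matrix.sub_mul, Matrix.mul_sub, Matrix.mul_sub, hproj]
      simp only [Matrix.one_mul, Matrix.mul_one]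
      abel
    · simp [hk, hproj]
  have := Matrix.posSemidef_conjTranspose_mul_self (QQ (D := D) φ t)
  rwa [h1, h2] at this

lemma PP_psd {φ ρp : Matrix (Fin D) (Fin D) ℂ} (hφ : φ.PosSemidef) (hρ : ρp.PosSemidef)
    (t : Finset (Fin u)) : (PP φ ρp t).PosSemidef := by
  refine tens_psd _ fun k => ?_
  by_cases hk : k ∈ t <;> simp [hk, hφ, hρ]

lemma PP_trace {φ ρp : Matrix (Fin D) (Fin D) ℂ} (htr : φ.trace = 1) (hρtr : ρp.trace = 1)
    (t : Finset (Fin u)) : (PP (u := u) φ ρp t).trace = 1 := by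
  rw [PP, tens_trace]
  simp [apply_ite Matrix.trace, htr, hρtr]

lemma QQ_PP_trace {φ ρp : Matrix (Fin D) (Fin D) ℂ}
    (hproj : φ * φ = φ) (htr : φ.trace = 1)
    (hρtr : ρp.trace = 1) (horth : φ * ρp = 0)
    (s t : Finset (Fin u)) :
    (QQ (D := D) φ s * PP φ ρp t).trace = if s = t then 1 else 0 := by
  rw [QQ, PP, tens_mul, tens_trace]
  have hfac : ∀ k : Fin u,
      ((if k ∈ s then 1 - φ else φ) * (if k ∈ t then ρp else φ)).trace
        = if (k ∈ s ↔ k ∈ t) then (1 : ℂ) else 0 := by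
    intro k
    by_cases hs : k ∈ s <;> by_cases ht : k ∈ t <;>
      simp [hs, ht, Matrix.sub_mul, hproj, horth, htr, hρtr, Matrix.trace_sub]
  rw [Finset.prod_congr rfl fun k _ => hfac k]
  rw [Finset.prod_boole]
  have hiff : (∀ k ∈ (Finset.univ : Finset (Fin u)), (k ∈ s ↔ k ∈ t)) ↔ s = t := by
    simp [Finset.ext_iff]
  simp only [hiff]

lemma group_card (F : ℕ → ℝ) :
    ∑ t : Finset (Fin u), F t.card
      = ∑ k ∈ Finset.range (u+1), (u.choose k : ℝ) * F k := by
  rw [show (Finset.univ : Finset (Finset (Fin u)))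
      = (Finset.univ : Finset (Fin u)).powerset from (Finset.powerset_univ).symm]
  rw [Finset.sum_powerset_apply_card, Finset.card_univ, Fintype.card_fin]
  simp only [nsmul_eq_mul]

lemma ww_sum (q : ℝ) : ∑ t : Finset (Fin u), ww u q t = 1 := by
  rw [show (fun t : Finset (Fin u) => ww u q t)
      = fun t : Finset (Fin u) => (fun k => q ^ k * (1 - q) ^ (u - k)) t.card from rfl]
  rw [group_card (fun k => q ^ k * (1 - q) ^ (u - k))]
  have h := add_pow q (1 - q) u
  simp only [add_sub_cancel, one_pow] at h
  conv_rhs => rw [h]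
  exact Finset.sum_congr rfl fun k _ => by ring


lemma psd_sum {ι : Type*} [Fintype ι] [DecidableEq ι] {α : Type*} [DecidableEq α]
    (S : Finset α) (f : α → Matrix ι ι ℂ) (h : ∀ a ∈ S, (f a).PosSemidef) :
    (∑ a ∈ S, f a).PosSemidef := by
  induction S using Finset.induction with
  | empty => simpa using (Matrix.PosSemidef.zero (n := ι) (R := ℂ))
  | insert _ _ hnot ih =>
      rw [Finset.sum_insert hnot]
      exact (h _ (Finset.mem_insert_self _ _)).add
        (ih fun a ha => h a (Finset.mem_insert_of_mem ha))

lemma re_trace_mul_expand' (M : Matrix (Fin u → Fin D) (Fin u → Fin D) ℂ)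
    (φ ρp : Matrix (Fin D) (Fin D) ℂ) (q : ℝ) :
    ((M * ∑ t : Finset (Fin u), ((ww u q t : ℝ) : ℂ) • PP φ ρp t).trace).re
      = ∑ t : Finset (Fin u), ww u q t * ((M * PP φ ρp t).trace).re := by
  rw [Matrix.mul_sum]
  simp_rw [Matrix.mul_smul, Matrix.trace_sum, Matrix.trace_smul, smul_eq_mul]
  rw [Complex.re_sum]
  exact Finset.sum_congr rfl fun t _ => Complex.re_ofReal_mul _ _

lemma trace_QQsum_mul {φ ρp : Matrix (Fin D) (Fin D) ℂ}
    (hproj : φ * φ = φ) (htr : φ.trace = 1)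
    (hρtr : ρp.trace = 1) (horth : φ * ρp = 0)
    (S : Finset (Finset (Fin u))) (q : ℝ) :
    (((∑ t ∈ S, QQ (D := D) φ t)
        * ∑ t' : Finset (Fin u), ((ww u q t' : ℝ) : ℂ) • PP φ ρp t').trace).re
      = ∑ t ∈ S, ww u q t := by
  rw [re_trace_mul_expand']
  have h1 : ∀ t' : Finset (Fin u),
      (((∑ t ∈ S, QQ (D := D) φ t) * PP φ ρp t').trace).re
        = if t' ∈ S then 1 else 0 := by
    intro t'
    rw [Finset.sum_mul, Matrix.trace_sum]
    rw [Finset.sum_congr rfl fun t _ => QQ_PP_trace hproj htr hρtr horth t t']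
    rw [Finset.sum_ite_eq' S t' (fun _ => (1 : ℂ))]
    simp [apply_ite Complex.re]
  rw [Finset.sum_congr rfl fun t' _ => by rw [h1 t']]
  simp only [mul_ite, mul_one, mul_zero]
  rw [← Finset.sum_filter, Finset.filter_mem_eq_inter, Finset.univ_inter]


theorem sSup_eq {D u : ℕ} (φ ρp : Matrix (Fin D) (Fin D) ℂ)
    (hherm : φᴴ = φ) (hproj : φ * φ = φ) (htr : φ.trace = 1)
    (hρpsd : ρp.PosSemidef) (hρtr : ρp.trace = 1) (horth : φ * ρp = 0) (q0 q1 : ℝ) :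
    sSup { x : ℝ | ∃ M : Fin 2 → Matrix (Fin u → Fin D) (Fin u → Fin D) ℂ,
        (∀ n, (M n).PosSemidef) ∧ (∑ n, M n) = 1 ∧
        x = ∑ n, (![1/2, 1/2] : Fin 2 → ℝ) n *
          ((M n * (![tensorPow ((q0:ℂ) • ρp + (((1-q0 : ℝ)):ℂ) • φ) u,
                     tensorPow ((q1:ℂ) • ρp + (((1-q1 : ℝ)):ℂ) • φ) u] n)).trace).re }
      = (1/2) * ∑ t : Finset (Fin u), max (ww u q0 t) (ww u q1 t) := by
  classical
  have hφpsd : φ.PosSemidef := by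
    have := Matrix.posSemidef_conjTranspose_mul_self φ
    rwa [hherm, hproj] at this
  set A : Finset (Finset (Fin u)) :=
    Finset.univ.filter (fun t => ww u q1 t ≤ ww u q0 t) with hA
  set M : Fin 2 → Matrix (Fin u → Fin D) (Fin u → Fin D) ℂ :=
    ![∑ t ∈ A, QQ (D := D) φ t, ∑ t ∈ Aᶜ, QQ (D := D) φ t] with hMdef
  have hM0 : M 0 = ∑ t ∈ A, QQ (D := D) φ t := rfl
  have hM1 : M 1 = ∑ t ∈ Aᶜ, QQ (D := D) φ t := rfl
  have hpsd' : ∀ (S : Finset (Finset (Fin u))), (∑ t ∈ S, QQ (D := D) φ t).PosSemidef :=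
    fun S => psd_sum _ _ fun t _ => QQ_psd hherm hproj t
  have hMpsd : ∀ n, (M n).PosSemidef := by
    intro n
    fin_cases n
    · exact hpsd' A
    · exact hpsd' Aᶜ
  have hMsum : (∑ n, M n) = 1 := by
    rw [Fin.sum_univ_two, hM0, hM1, Finset.sum_add_sum_compl, QQ_sum]
  have hsplit : ∑ t : Finset (Fin u), max (ww u q0 t) (ww u q1 t)
      = (∑ t ∈ A, ww u q0 t) + ∑ t ∈ Aᶜ, ww u q1 t := by
    rw [← Finset.sum_add_sum_compl A (fun t => max (ww u q0 t) (ww u q1 t))]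
    congr 1
    · exact Finset.sum_congr rfl fun t ht => max_eq_left (Finset.mem_filter.mp ht).2
    · refine Finset.sum_congr rfl fun t ht => max_eq_right ?_
      have h' : ¬ (ww u q1 t ≤ ww u q0 t) := by
        simpa [hA] using Finset.mem_compl.mp ht
      exact le_of_not_ge h'
  have hval : (∑ n, (![1/2, 1/2] : Fin 2 → ℝ) n *
          ((M n * (![tensorPow ((q0:ℂ) • ρp + (((1-q0 : ℝ)):ℂ) • φ) u,
                     tensorPow ((q1:ℂ) • ρp + (((1-q1 : ℝ)):ℂ) • φ) u] n)).trace).re)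
      = (1/2) * ∑ t : Finset (Fin u), max (ww u q0 t) (ww u q1 t) := by
    rw [Fin.sum_univ_two]
    simp only [Matrix.cons_val_zero, Matrix.cons_val_one, Matrix.head_cons]
    rw [hM0, hM1, tensorPow_expand φ ρp q0, tensorPow_expand φ ρp q1]
    rw [trace_QQsum_mul hproj htr hρtr horth A q0,
      trace_QQsum_mul hproj htr hρtr horth Aᶜ q1]
    rw [hsplit]
    ring
  have hmem : (1/2) * ∑ t : Finset (Fin u), max (ww u q0 t) (ww u q1 t)
      ∈ { x : ℝ | ∃ M : Fin 2 → Matrix (Fin u → Fin D) (Fin u → Fin D) ℂ,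
        (∀ n, (M n).PosSemidef) ∧ (∑ n, M n) = 1 ∧
        x = ∑ n, (![1/2, 1/2] : Fin 2 → ℝ) n *
          ((M n * (![tensorPow ((q0:ℂ) • ρp + (((1-q0 : ℝ)):ℂ) • φ) u,
                     tensorPow ((q1:ℂ) • ρp + (((1-q1 : ℝ)):ℂ) • φ) u] n)).trace).re } :=
    ⟨M, hMpsd, hMsum, hval.symm⟩
  have hub : ∀ x ∈ { x : ℝ | ∃ M : Fin 2 → Matrix (Fin u → Fin D) (Fin u → Fin D) ℂ,
        (∀ n, (M n).PosSemidef) ∧ (∑ n, M n) = 1 ∧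
        x = ∑ n, (![1/2, 1/2] : Fin 2 → ℝ) n *
          ((M n * (![tensorPow ((q0:ℂ) • ρp + (((1-q0 : ℝ)):ℂ) • φ) u,
                     tensorPow ((q1:ℂ) • ρp + (((1-q1 : ℝ)):ℂ) • φ) u] n)).trace).re },
      x ≤ (1/2) * ∑ t : Finset (Fin u), max (ww u q0 t) (ww u q1 t) := by
    rintro x ⟨N, hNpsd, hNsum, rfl⟩
    have hN01 : N 0 + N 1 = 1 := by rwa [Fin.sum_univ_two] at hNsum
    rw [Fin.sum_univ_two]
    simp only [Matrix.cons_val_zero, Matrix.cons_val_one, Matrix.head_cons]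
    rw [tensorPow_expand φ ρp q0, tensorPow_expand φ ρp q1]
    rw [re_trace_mul_expand', re_trace_mul_expand']
    have hf : ∀ t, 0 ≤ ((N 0 * PP φ ρp t).trace).re :=
      fun t => re_trace_mul_nonneg (hNpsd 0) (PP_psd hφpsd hρpsd t)
    have hg : ∀ t, 0 ≤ ((N 1 * PP φ ρp t).trace).re :=
      fun t => re_trace_mul_nonneg (hNpsd 1) (PP_psd hφpsd hρpsd t)
    have hfg : ∀ t, ((N 0 * PP φ ρp t).trace).re + ((N 1 * PP φ ρp t).trace).re = 1 := by
      intro t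
      have h' : (N 0 * PP φ ρp t) + (N 1 * PP φ ρp t) = PP φ ρp t := by
        rw [← Matrix.add_mul, hN01, Matrix.one_mul]
      have h2 := congrArg (fun z => (Matrix.trace z).re) h'
      simpa [Matrix.trace_add, PP_trace htr hρtr t] using h2
    have hterm : ∀ t : Finset (Fin u),
        ww u q0 t * ((N 0 * PP φ ρp t).trace).re
          + ww u q1 t * ((N 1 * PP φ ρp t).trace).re
        ≤ max (ww u q0 t) (ww u q1 t) := by
      intro t
      calc ww u q0 t * ((N 0 * PP φ ρp t).trace).re
            + ww u q1 t * ((N 1 * PP φ ρp t).trace).re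
          ≤ max (ww u q0 t) (ww u q1 t) * ((N 0 * PP φ ρp t).trace).re
            + max (ww u q0 t) (ww u q1 t) * ((N 1 * PP φ ρp t).trace).re :=
            add_le_add (mul_le_mul_of_nonneg_right (le_max_left _ _) (hf t))
              (mul_le_mul_of_nonneg_right (le_max_right _ _) (hg t))
        _ = max (ww u q0 t) (ww u q1 t)
            * (((N 0 * PP φ ρp t).trace).re + ((N 1 * PP φ ρp t).trace).re) := by ring
        _ = max (ww u q0 t) (ww u q1 t) := by rw [hfg t, mul_one]
    calc (1:ℝ)/2 * ∑ t : Finset (Fin u), ww u q0 t * ((N 0 * PP φ ρp t).trace).re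
          + 1/2 * ∑ t : Finset (Fin u), ww u q1 t * ((N 1 * PP φ ρp t).trace).re
        = 1/2 * ∑ t : Finset (Fin u), (ww u q0 t * ((N 0 * PP φ ρp t).trace).re
            + ww u q1 t * ((N 1 * PP φ ρp t).trace).re) := by
          rw [Finset.sum_add_distrib]; ring
      _ ≤ (1/2) * ∑ t : Finset (Fin u), max (ww u q0 t) (ww u q1 t) := by
          have := Finset.sum_le_sum (fun t (_ : t ∈ Finset.univ) => hterm t)
          linarith
  exact le_antisymm (csSup_le ⟨_, hmem⟩ hub)
    (le_csSup ⟨_, fun x hx => hub x hx⟩ hmem)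

lemma fErr_one (q0 q1 : ℝ) : fErr 1 q0 q1 = (1 - |q0 - q1|) / 2 := by
  simp only [fErr, Finset.sum_range_succ, Finset.sum_range_zero]
  norm_num
  rw [abs_sub_comm q1 q0]
  ring

end HelstromAux

open HelstromAux in
/-- Helstrom limit for binary discrimination of orthogonal-replacement channel
outputs (Lemma 2), together with the one-shot special case. -/
theorem helstrom_binary_orc {D : ℕ} (φ ρp : Matrix (Fin D) (Fin D) ℂ)
    (hherm : φᴴ = φ) (hproj : φ * φ = φ) (htr : φ.trace = 1)
    (hρp : IsDensityMatrix ρp) (horth : φ * ρp = 0)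
    (q0 q1 : ℝ) (h0 : q0 ∈ Set.Icc (0:ℝ) 1) (h1 : q1 ∈ Set.Icc (0:ℝ) 1)
    (u : ℕ) (hu : 1 ≤ u) :
    helstrom ![tensorPow ((q0:ℂ) • ρp + (((1-q0 : ℝ)):ℂ) • φ) u,
               tensorPow ((q1:ℂ) • ρp + (((1-q1 : ℝ)):ℂ) • φ) u] ![1/2, 1/2]
        = fErr u q0 q1 ∧
    fErr 1 q0 q1 = (1 - |q0 - q1|) / 2 := by
  obtain ⟨hρpsd, hρtr⟩ := hρp
  refine ⟨?_, HelstromAux.fErr_one q0 q1⟩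
  simp only [helstrom]
  rw [HelstromAux.sSup_eq φ ρp hherm hproj htr hρpsd hρtr horth q0 q1]
  have hmax : ∀ a b : ℝ, max a b = (a + b + |a - b|)/2 := by
    intro a b
    rcases le_total a b with h | h
    · rw [max_eq_right h, abs_of_nonpos (by linarith)]; ring
    · rw [max_eq_left h, abs_of_nonneg (by linarith)]; ring
  have h1 : ∑ t : Finset (Fin u), max (HelstromAux.ww u q0 t) (HelstromAux.ww u q1 t)
      = (∑ t : Finset (Fin u), HelstromAux.ww u q0 t
        + ∑ t : Finset (Fin u), HelstromAux.ww u q1 t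
        + ∑ t : Finset (Fin u), |HelstromAux.ww u q0 t - HelstromAux.ww u q1 t|) / 2 := by
    rw [Finset.sum_congr rfl fun t _ => hmax _ _, ← Finset.sum_div,
      Finset.sum_add_distrib, Finset.sum_add_distrib]
  have habs : ∑ t : Finset (Fin u), |HelstromAux.ww u q0 t - HelstromAux.ww u q1 t|
      = ∑ k ∈ Finset.range (u+1), (u.choose k : ℝ)
          * |q0^k * (1-q0)^(u-k) - q1^k * (1-q1)^(u-k)| :=
    HelstromAux.group_card (u := u)
      (fun k => |q0^k * (1-q0)^(u-k) - q1^k * (1-q1)^(u-k)|)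
  rw [h1, HelstromAux.ww_sum, HelstromAux.ww_sum, habs, fErr]
  ring
end
end

section
/- Binary discrimination of depolarizing channels with a maximally entangled input (Proposition, non-adaptive content): Let d ≥ 2 and let ζ be the d²-dimensional maximally entangled pure state. For q ∈ [0,1] set ρ_q = q·(1/d²)·I_{d²} + (1−q)·ζ, a density matrix on ℂ^{d²}. Then for all q0, q1 ∈ [0,1] and u ≥ 1, the Helstrom error probability of the two equiprobable states ρ_{q0}^{⊗u} and ρ_{q1}^{⊗u} equals f_u((1 − d^{−2})·q0, (1 − d^{−2})·q1). -/
open Matrix BigOperators Finset ComplexOrder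

noncomputable section

/-- The `d²`-dimensional maximally entangled pure state. -/
def maxEnt (d : ℕ) : Matrix (Fin d × Fin d) (Fin d × Fin d) ℂ :=
  fun p q => if p.1 = p.2 ∧ q.1 = q.2 then (1/(d:ℂ)) else 0

/-- The Choi matrix of the depolarizing channel: output of a maximally entangled
input, `ρ_q = q (1/d²) I + (1−q) ζ`. -/
def depolChoi (d : ℕ) (q : ℝ) : Matrix (Fin d × Fin d) (Fin d × Fin d) ℂ :=
  (q:ℂ) • ((1/(d:ℂ)^2) • (1 : Matrix (Fin d × Fin d) (Fin d × Fin d) ℂ))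
    + (((1-q : ℝ)):ℂ) • maxEnt d

/-! ### Auxiliary lemmas -/

set_option linter.unusedSectionVars false
set_option maxHeartbeats 1000000

section Aux

variable {ι : Type*} [Fintype ι] [DecidableEq ι]

lemma tensorPow_mul (A B : Matrix ι ι ℂ) (u : ℕ) :
    tensorPow (A * B) u = tensorPow A u * tensorPow B u := by
  ext i j
  simp only [tensorPow, Matrix.mul_apply, Finset.prod_univ_sum]
  refine Finset.sum_congr rfl fun x _ => ?_
  rw [Finset.prod_mul_distrib]

lemma tensorPow_conjTranspose (A : Matrix ι ι ℂ) (u : ℕ) :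
    tensorPow Aᴴ u = (tensorPow A u)ᴴ := by
  ext i j
  simp only [tensorPow, Matrix.conjTranspose_apply]
  exact (star_prod _ _).symm

lemma tensorPow_one (u : ℕ) : tensorPow (1 : Matrix ι ι ℂ) u = 1 := by
  ext i j
  simp only [tensorPow, Matrix.one_apply]
  by_cases h : i = j
  · subst h; simp
  · rw [if_neg h]
    obtain ⟨k, hk⟩ := Function.ne_iff.mp h
    exact Finset.prod_eq_zero (Finset.mem_univ k) (by simp [hk])

lemma tensorPow_diagonal (g : ι → ℂ) (u : ℕ) :
    tensorPow (Matrix.diagonal g) u = Matrix.diagonal (fun i : Fin u → ι => ∏ k, g (i k)) := by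
  ext i j
  simp only [tensorPow, Matrix.diagonal_apply]
  by_cases h : i = j
  · subst h; simp
  · rw [if_neg h]
    obtain ⟨k, hk⟩ := Function.ne_iff.mp h
    exact Finset.prod_eq_zero (Finset.mem_univ k) (by simp [hk])

lemma pascal_sum (D : ℝ) (f : ℕ → ℝ) (u : ℕ) :
    (∑ j ∈ Finset.range (u+1), (u.choose j : ℝ) * D^(u-j) * f (j+1))
    + D * ∑ j ∈ Finset.range (u+1), (u.choose j : ℝ) * D^(u-j) * f j
    = ∑ j ∈ Finset.range (u+2), ((u+1).choose j : ℝ) * D^(u+1-j) * f j := by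
  rw [Finset.sum_range_succ' (fun j => ((u+1).choose j : ℝ) * D^(u+1-j) * f j) (u+1)]
  have h1 : ∀ j ∈ Finset.range (u+1), ((u+1).choose (j+1) : ℝ) * D^(u+1-(j+1)) * f (j+1)
      = (u.choose j : ℝ) * D^(u-j) * f (j+1) + (u.choose (j+1) : ℝ) * D^(u-j) * f (j+1) := by
    intro j _
    rw [Nat.succ_sub_succ, Nat.choose_succ_succ]
    push_cast
    ring
  rw [Finset.sum_congr rfl h1, Finset.sum_add_distrib]
  have h2 : D * ∑ j ∈ Finset.range (u+1), (u.choose j : ℝ) * D^(u-j) * f j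
      = (∑ j ∈ Finset.range (u+1), (u.choose (j+1) : ℝ) * D^(u-j) * f (j+1))
        + D^(u+1) * f 0 := by
    rw [Finset.sum_range_succ' (fun j => (u.choose j : ℝ) * D^(u-j) * f j) u]
    rw [Finset.sum_range_succ (fun j => (u.choose (j+1) : ℝ) * D^(u-j) * f (j+1)) u]
    simp only [Nat.choose_succ_self, Nat.cast_zero, zero_mul, add_zero, Nat.choose_zero_right,
      Nat.cast_one, one_mul, Nat.sub_zero]
    rw [mul_add]
    rw [Finset.mul_sum]
    congr 1
    · refine Finset.sum_congr rfl fun j hj => ?_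
      rw [Finset.mem_range] at hj
      have : u - j = (u - (j+1)) + 1 := by omega
      rw [this]
      ring
    · rw [pow_succ]; ring
  rw [h2]
  simp only [Nat.choose_zero_right, Nat.cast_one, one_mul, Nat.sub_zero]
  ring

lemma sum_count {κ : Type*} [Fintype κ] [DecidableEq κ] (i₀ : κ) (u : ℕ) (f : ℕ → ℝ) :
    ∑ i : Fin u → κ, f (∑ k, if i k = i₀ then 1 else 0) =
      ∑ j ∈ Finset.range (u+1),
        (u.choose j : ℝ) * ((Fintype.card κ - 1 : ℕ) : ℝ)^(u-j) * f j := by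
  induction u generalizing f with
  | zero => simp
  | succ u ih =>
    rw [← Equiv.sum_comp (Fin.consEquiv (fun _ : Fin (u+1) => κ))
      (fun i => f (∑ k, if i k = i₀ then 1 else 0))]
    rw [Fintype.sum_prod_type]
    have hc : ∀ (x : κ) (i' : Fin u → κ),
        (∑ k : Fin (u+1), if (Fin.consEquiv (fun _ : Fin (u+1) => κ)) (x, i') k = i₀
          then (1:ℕ) else 0)
        = (∑ k : Fin u, if i' k = i₀ then 1 else 0) + (if x = i₀ then 1 else 0) := by
      intro x i'
      rw [Fin.sum_univ_succ]
      simp [Fin.consEquiv]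
      ring
    simp only [hc]
    rw [← Finset.add_sum_erase _ _ (Finset.mem_univ i₀)]
    have h10 : (if i₀ = i₀ then (1:ℕ) else 0) = 1 := if_pos rfl
    simp only [h10]
    have hrest : ∑ x ∈ Finset.univ.erase i₀, ∑ i' : Fin u → κ,
        f ((∑ k : Fin u, if i' k = i₀ then 1 else 0) + (if x = i₀ then 1 else 0))
        = ((Fintype.card κ - 1 : ℕ) : ℝ) * ∑ i' : Fin u → κ,
            f (∑ k : Fin u, if i' k = i₀ then 1 else 0) := by
      rw [Finset.sum_congr rfl (fun x hx => ?_), Finset.sum_const, Finset.card_erase_of_mem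
        (Finset.mem_univ i₀), Finset.card_univ, nsmul_eq_mul]
      have : (if x = i₀ then (1:ℕ) else 0) = 0 := if_neg (Finset.ne_of_mem_erase hx)
      simp only [this, add_zero]
    rw [hrest]
    simp only [if_true]
    have ih1 := ih (fun j => f (j + 1))
    rw [ih1, ih f]
    exact pascal_sum _ f u

lemma helstrom_unitary_conj {m : ℕ} (U : Matrix ι ι ℂ) (hU : U * Uᴴ = 1) (hU' : Uᴴ * U = 1)
    (ρ : Fin m → Matrix ι ι ℂ) (p : Fin m → ℝ) :
    helstrom (fun n => U * ρ n * Uᴴ) p = helstrom ρ p := by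
  unfold helstrom
  congr 1
  congr 1
  ext x
  constructor
  · rintro ⟨M, hpsd, hsum, rfl⟩
    refine ⟨fun n => Uᴴ * M n * U, fun n => (hpsd n).conjTranspose_mul_mul_same U, ?_, ?_⟩
    · rw [← Finset.sum_mul, ← Finset.mul_sum, hsum, mul_one, hU']
    · refine Finset.sum_congr rfl fun n _ => ?_
      congr 2
      rw [Matrix.mul_assoc (Uᴴ * M n) U (ρ n), Matrix.trace_mul_cycle Uᴴ (M n) (U * ρ n),
          Matrix.trace_mul_comm (M n) (U * ρ n * Uᴴ)]
  · rintro ⟨M, hpsd, hsum, rfl⟩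
    refine ⟨fun n => U * M n * Uᴴ, fun n => (hpsd n).mul_mul_conjTranspose_same U, ?_, ?_⟩
    · rw [← Finset.sum_mul, ← Finset.mul_sum, hsum, mul_one, hU]
    · refine Finset.sum_congr rfl fun n _ => ?_
      congr 2
      rw [Matrix.mul_assoc (U * M n) Uᴴ (U * ρ n * Uᴴ)]
      have h : Uᴴ * (U * ρ n * Uᴴ) = ρ n * Uᴴ := by
        rw [← Matrix.mul_assoc, ← Matrix.mul_assoc, hU', Matrix.one_mul]
      rw [h, Matrix.trace_mul_comm (U * M n)]
      simp only [Matrix.mul_assoc]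
      rw [← Matrix.mul_assoc Uᴴ U (M n), hU', Matrix.one_mul, Matrix.trace_mul_comm]

lemma trace_mul_diagonal_re {κ : Type*} [Fintype κ] [DecidableEq κ]
    (M : Matrix κ κ ℂ) (g : κ → ℝ) :
    ((M * Matrix.diagonal (fun i => (g i : ℂ))).trace).re = ∑ i, (M i i).re * g i := by
  rw [Matrix.trace]
  rw [Complex.re_sum]
  refine Finset.sum_congr rfl fun i _ => ?_
  rw [Matrix.diag_apply, Matrix.mul_diagonal]
  simp [Complex.mul_re]

lemma psd_diag_re_nonneg {κ : Type*} [Fintype κ] [DecidableEq κ]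
    {M : Matrix κ κ ℂ} (hM : M.PosSemidef) (i : κ) : 0 ≤ (M i i).re := by
  have h := hM.re_dotProduct_nonneg (Pi.single i 1)
  simpa [dotProduct, Matrix.mulVec, Pi.single_apply, Finset.sum_ite_eq] using h

lemma helstrom_diagonal {κ : Type*} [Fintype κ] [DecidableEq κ] (g0 g1 : κ → ℝ)
    (h0 : ∑ i, g0 i = 1) (h1 : ∑ i, g1 i = 1) :
    helstrom ![Matrix.diagonal (fun i => (g0 i : ℂ)), Matrix.diagonal (fun i => (g1 i : ℂ))]
      ![1/2, 1/2] = 1/2 - (1/4) * ∑ i, |g0 i - g1 i| := by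
  set δ : κ → ℝ := fun i => g0 i - g1 i with hδ
  set B : ℝ := 1/2 + 1/2 * ∑ i, max (δ i) 0 with hB
  have hmax : ∀ i, max (δ i) 0 = (δ i + |δ i|)/2 := by
    intro i
    rcases le_total (δ i) 0 with h | h
    · rw [max_eq_right h, abs_of_nonpos h]; ring
    · rw [max_eq_left h, abs_of_nonneg h]; ring
  have hsum_delta : ∑ i, δ i = 0 := by
    simp only [hδ, Finset.sum_sub_distrib, h0, h1, sub_self]
  have hBval : B = 1/2 + (1/4) * ∑ i, |δ i| := by
    rw [hB, Finset.sum_congr rfl fun i _ => hmax i]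
    have h2 : ∑ i, (δ i + |δ i|)/2 = (∑ i, δ i + ∑ i, |δ i|)/2 := by
      rw [← Finset.sum_add_distrib, ← Finset.sum_div]
    rw [h2, hsum_delta]
    ring
  have key : sSup { x : ℝ | ∃ M : Fin 2 → Matrix κ κ ℂ,
      (∀ n, (M n).PosSemidef) ∧ (∑ n, M n) = 1 ∧
      x = ∑ n, (![1/2, 1/2] : Fin 2 → ℝ) n *
        (((M n * (![Matrix.diagonal (fun i => (g0 i : ℂ)),
          Matrix.diagonal (fun i => (g1 i : ℂ))] : Fin 2 → Matrix κ κ ℂ) n).trace).re) } = B := by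
    have hub : ∀ x ∈ { x : ℝ | ∃ M : Fin 2 → Matrix κ κ ℂ,
        (∀ n, (M n).PosSemidef) ∧ (∑ n, M n) = 1 ∧
        x = ∑ n, (![1/2, 1/2] : Fin 2 → ℝ) n *
          (((M n * (![Matrix.diagonal (fun i => (g0 i : ℂ)),
            Matrix.diagonal (fun i => (g1 i : ℂ))] : Fin 2 → Matrix κ κ ℂ) n).trace).re) },
        x ≤ B := by
      rintro x ⟨M, hpsd, hsumM, rfl⟩
      rw [Fin.sum_univ_two] at hsumM ⊢
      simp only [Matrix.cons_val_zero, Matrix.cons_val_one, Matrix.head_cons]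
      rw [trace_mul_diagonal_re, trace_mul_diagonal_re]
      have hm0 : ∀ i, 0 ≤ ((M 0) i i).re := psd_diag_re_nonneg (hpsd 0)
      have hm1 : ∀ i, 0 ≤ ((M 1) i i).re := psd_diag_re_nonneg (hpsd 1)
      have hsum1 : ∀ i, ((M 0) i i).re + ((M 1) i i).re = 1 := by
        intro i
        have := congrArg (fun A => ((A i i : ℂ)).re) hsumM
        simpa [Matrix.add_apply, Matrix.one_apply] using this
      have hterm : ∀ i, ((M 0) i i).re * g0 i + ((M 1) i i).re * g1 i
          ≤ g1 i + max (δ i) 0 := by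
        intro i
        have h1i : ((M 1) i i).re = 1 - ((M 0) i i).re := by linarith [hsum1 i]
        rw [h1i]
        have hle1 : ((M 0) i i).re ≤ 1 := by linarith [hm1 i, hsum1 i]
        have : ((M 0) i i).re * g0 i + (1 - ((M 0) i i).re) * g1 i
            = g1 i + ((M 0) i i).re * δ i := by rw [hδ]; ring
        rw [this]
        have : ((M 0) i i).re * δ i ≤ max (δ i) 0 := by
          rcases le_total (δ i) 0 with h | h
          · calc ((M 0) i i).re * δ i ≤ 0 := mul_nonpos_of_nonneg_of_nonpos (hm0 i) h
              _ ≤ max (δ i) 0 := le_max_right _ _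
          · calc ((M 0) i i).re * δ i ≤ 1 * δ i :=
                mul_le_mul_of_nonneg_right hle1 h
              _ = δ i := one_mul _
              _ ≤ max (δ i) 0 := le_max_left _ _
        linarith
      have : ∑ i, (((M 0) i i).re * g0 i) + ∑ i, (((M 1) i i).re * g1 i)
          ≤ ∑ i, (g1 i + max (δ i) 0) := by
        rw [← Finset.sum_add_distrib]
        exact Finset.sum_le_sum fun i _ => hterm i
      rw [Finset.sum_add_distrib, h1] at this
      rw [hB]
      linarith
    have hmem : B ∈ { x : ℝ | ∃ M : Fin 2 → Matrix κ κ ℂ,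
        (∀ n, (M n).PosSemidef) ∧ (∑ n, M n) = 1 ∧
        x = ∑ n, (![1/2, 1/2] : Fin 2 → ℝ) n *
          (((M n * (![Matrix.diagonal (fun i => (g0 i : ℂ)),
            Matrix.diagonal (fun i => (g1 i : ℂ))] : Fin 2 → Matrix κ κ ℂ) n).trace).re) } := by
      set ind : κ → ℝ := fun i => if 0 < δ i then 1 else 0 with hind
      refine ⟨![Matrix.diagonal (fun i => (ind i : ℂ)),
        Matrix.diagonal (fun i => ((1 - ind i : ℝ) : ℂ))], ?_, ?_, ?_⟩
      · intro n
        fin_cases n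
        · simp only [Matrix.cons_val_zero]
          refine Matrix.posSemidef_diagonal_iff.mpr fun i => ?_
          rw [Complex.zero_le_real]
          simp only [hind]
          split <;> norm_num
        · simp only [Matrix.cons_val_one, Matrix.head_cons]
          refine Matrix.posSemidef_diagonal_iff.mpr fun i => ?_
          rw [Complex.zero_le_real]
          simp only [hind]
          split <;> norm_num
      · rw [Fin.sum_univ_two]
        simp only [Matrix.cons_val_zero, Matrix.cons_val_one, Matrix.head_cons]
        rw [Matrix.diagonal_add, ← Matrix.diagonal_one]
        congr 1
        funext i
        push_cast
        ring
      · rw [Fin.sum_univ_two]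
        simp only [Matrix.cons_val_zero, Matrix.cons_val_one, Matrix.head_cons]
        rw [trace_mul_diagonal_re, trace_mul_diagonal_re]
        have e0 : ∀ i, ((Matrix.diagonal (fun i => (ind i : ℂ))) i i).re = ind i := by
          intro i; simp [Matrix.diagonal_apply_eq]
        have e1 : ∀ i, ((Matrix.diagonal (fun i => ((1 - ind i : ℝ) : ℂ))) i i).re
            = 1 - ind i := by
          intro i; simp [Matrix.diagonal_apply_eq]
        simp only [e0, e1]
        have : ∀ i, ind i * g0 i + (1 - ind i) * g1 i = g1 i + max (δ i) 0 := by
          intro i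
          have : ind i * g0 i + (1 - ind i) * g1 i = g1 i + ind i * δ i := by rw [hδ]; ring
          rw [this]
          congr 1
          simp only [hind]
          rcases lt_or_ge 0 (δ i) with h | h
          · rw [if_pos h, one_mul, max_eq_left h.le]
          · rw [if_neg (not_lt.mpr h), zero_mul, max_eq_right h]
        have hsplit : ∑ i, (ind i * g0 i) + ∑ i, ((1 - ind i) * g1 i)
            = ∑ i, (g1 i + max (δ i) 0) := by
          rw [← Finset.sum_add_distrib]
          exact Finset.sum_congr rfl fun i _ => this i
        rw [Finset.sum_add_distrib, h1] at hsplit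
        rw [hB]
        linarith
    exact le_antisymm (Real.sSup_le hub (by rw [hB]; positivity))
      (le_csSup ⟨B, fun x hx => hub x hx⟩ hmem)
  rw [helstrom, key, hBval]
  ring

lemma maxEnt_isHermitian (d : ℕ) : (maxEnt d).IsHermitian := by
  unfold Matrix.IsHermitian
  ext ⟨i, i'⟩ ⟨j, j'⟩
  simp only [Matrix.conjTranspose_apply, maxEnt]
  by_cases h1 : i = i' <;> by_cases h2 : j = j' <;> simp [h1, h2, and_comm]

lemma maxEnt_mul_self {d : ℕ} (hd : 0 < d) : maxEnt d * maxEnt d = maxEnt d := by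
  have hdC : (d:ℂ) ≠ 0 := Nat.cast_ne_zero.mpr hd.ne'
  ext ⟨i, i'⟩ ⟨j, j'⟩
  rw [Matrix.mul_apply]
  have hterm : ∀ r : Fin d × Fin d,
      maxEnt d (i, i') r * maxEnt d r (j, j')
      = if i = i' ∧ j = j' then (if r.1 = r.2 then 1/(d:ℂ)^2 else 0) else 0 := by
    intro r
    by_cases h1 : i = i' <;> by_cases h2 : j = j' <;> by_cases h3 : r.1 = r.2 <;>
      simp [maxEnt, h1, h2, h3] <;> ring
  rw [Finset.sum_congr rfl fun r _ => hterm r]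
  by_cases hij : i = i' ∧ j = j'
  · simp only [if_pos hij]
    rw [Fintype.sum_prod_type]
    simp only [Finset.sum_ite_eq, Finset.mem_univ, if_true]
    rw [Finset.sum_const, Finset.card_univ, Fintype.card_fin, nsmul_eq_mul, maxEnt,
      if_pos hij]
    field_simp
  · simp [maxEnt, hij]

lemma maxEnt_trace {d : ℕ} (hd : 0 < d) : (maxEnt d).trace = 1 := by
  have hdC : (d:ℂ) ≠ 0 := Nat.cast_ne_zero.mpr hd.ne'
  rw [Matrix.trace]
  have : ∀ p : Fin d × Fin d, (maxEnt d).diag p = if p.1 = p.2 then 1/(d:ℂ) else 0 := by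
    intro p
    simp [maxEnt, Matrix.diag_apply]
  rw [Finset.sum_congr rfl fun p _ => this p, Fintype.sum_prod_type]
  simp only [Finset.sum_ite_eq, Finset.mem_univ, if_true]
  rw [Finset.sum_const, Finset.card_univ, Fintype.card_fin, nsmul_eq_mul]
  field_simp

end Aux

/-- Binary discrimination of depolarizing channels with a maximally entangled input. -/
theorem helstrom_binary_depolarizing_entangled (d : ℕ) (hd : 2 ≤ d)
    (q0 q1 : ℝ) (h0 : q0 ∈ Set.Icc (0:ℝ) 1) (h1 : q1 ∈ Set.Icc (0:ℝ) 1)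
    (u : ℕ) (hu : 1 ≤ u) :
    helstrom ![tensorPow (depolChoi d q0) u, tensorPow (depolChoi d q1) u] ![1/2, 1/2]
      = fErr u ((1 - 1/(d:ℝ)^2) * q0) ((1 - 1/(d:ℝ)^2) * q1) := by
  have hd0 : 0 < d := lt_of_lt_of_le (by norm_num) hd
  have hdR : ((d:ℝ)) ≠ 0 := Nat.cast_ne_zero.mpr hd0.ne'
  have hdC : ((d:ℂ)) ≠ 0 := Nat.cast_ne_zero.mpr hd0.ne'
  have hherm : (maxEnt d).IsHermitian := maxEnt_isHermitian d
  set V : Matrix (Fin d × Fin d) (Fin d × Fin d) ℂ := ((Matrix.IsHermitian.eigenvectorUnitary hherm : Matrix.unitaryGroup (Fin d × Fin d) ℂ) : Matrix (Fin d × Fin d) (Fin d × Fin d) ℂ) with hVdef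
  have hVmem : V ∈ Matrix.unitaryGroup (Fin d × Fin d) ℂ := (Matrix.IsHermitian.eigenvectorUnitary hherm).2
  have hV1 : V * Vᴴ = 1 := by
    rw [← Matrix.star_eq_conjTranspose]
    exact (Matrix.mem_unitaryGroup_iff).mp hVmem
  have hV2 : Vᴴ * V = 1 := by
    rw [← Matrix.star_eq_conjTranspose]
    exact (Matrix.mem_unitaryGroup_iff').mp hVmem
  set eig : Fin d × Fin d → ℝ := hherm.eigenvalues with heigdef
  have hsm : Vᴴ * maxEnt d * V = Matrix.diagonal (fun i => ((eig i : ℝ) : ℂ)) := by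
    rw [← Matrix.star_eq_conjTranspose]
    have h := hherm.conjStarAlgAut_star_eigenvectorUnitary
    rw [Unitary.conjStarAlgAut_apply, Unitary.coe_star, star_star] at h
    exact h
  have hDD : Matrix.diagonal (fun i => ((eig i : ℝ) : ℂ))
      * Matrix.diagonal (fun i => ((eig i : ℝ) : ℂ))
      = Matrix.diagonal (fun i => ((eig i : ℝ) : ℂ)) := by
    rw [← hsm]
    simp only [Matrix.mul_assoc]
    rw [← Matrix.mul_assoc V Vᴴ (maxEnt d * V), hV1, Matrix.one_mul,
      ← Matrix.mul_assoc (maxEnt d) (maxEnt d) V, maxEnt_mul_self hd0]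
  have hdich : ∀ i, eig i = 0 ∨ eig i = 1 := by
    intro i
    rw [Matrix.diagonal_mul_diagonal] at hDD
    have h := Matrix.diagonal_injective hDD
    have h2 : eig i * eig i = eig i := by
      have := congrFun h i
      exact_mod_cast this
    rcases mul_eq_zero.mp (show eig i * (eig i - 1) = 0 by
      rw [mul_sub, mul_one, h2, sub_self]) with h' | h'
    · exact Or.inl h'
    · exact Or.inr (by linarith [sub_eq_zero.mp h'])
  have htreig : ∑ i, eig i = 1 := by
    have h2 : (Matrix.diagonal (fun i => ((eig i:ℝ):ℂ))).trace = 1 := by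
      rw [← hsm, Matrix.trace_mul_cycle, hV1, Matrix.one_mul, maxEnt_trace hd0]
    rw [Matrix.trace_diagonal] at h2
    exact_mod_cast h2
  obtain ⟨i₀, hi₀⟩ : ∃ i₀, Finset.univ.filter (fun i => eig i = 1) = {i₀} := by
    apply Finset.card_eq_one.mp
    have hcount : ((Finset.univ.filter (fun i => eig i = 1)).card : ℝ) = ∑ i, eig i := by
      rw [Finset.card_filter]
      push_cast
      refine Finset.sum_congr rfl fun i _ => ?_
      rcases hdich i with h | h <;> simp [h]
    have hone : ((Finset.univ.filter (fun i => eig i = 1)).card : ℝ) = 1 := by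
      rw [hcount, htreig]
    exact_mod_cast hone
  have heig0 : eig i₀ = 1 := by
    have : i₀ ∈ Finset.univ.filter (fun i => eig i = 1) := by
      rw [hi₀]; exact Finset.mem_singleton_self i₀
    exact (Finset.mem_filter.mp this).2
  have heigne : ∀ i, i ≠ i₀ → eig i = 0 := by
    intro i hne
    rcases hdich i with h | h
    · exact h
    · exfalso
      have : i ∈ Finset.univ.filter (fun i => eig i = 1) :=
        Finset.mem_filter.mpr ⟨Finset.mem_univ i, h⟩
      rw [hi₀, Finset.mem_singleton] at this
      exact hne this
  set gq : ℝ → (Fin d × Fin d) → ℝ := fun q i => q/(d:ℝ)^2 + (1-q) * eig i with hgqdef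
  have hdiagq : ∀ q : ℝ, Matrix.diagonal (fun i => ((gq q i : ℝ) : ℂ))
      = ((q:ℂ) * (1/(d:ℂ)^2)) • (1 : Matrix (Fin d × Fin d) (Fin d × Fin d) ℂ)
        + (((1-q:ℝ)):ℂ) • Matrix.diagonal (fun i => ((eig i : ℝ) : ℂ)) := by
    intro q
    ext i j
    by_cases h : i = j
    · subst h
      simp only [Matrix.add_apply, Matrix.smul_apply, Matrix.diagonal_apply_eq,
        Matrix.one_apply_eq, smul_eq_mul, mul_one, hgqdef]
      push_cast
      ring
    · simp [Matrix.diagonal_apply_ne _ h, Matrix.one_apply_ne h]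
  have hspec : ∀ q : ℝ, depolChoi d q
      = V * Matrix.diagonal (fun i => ((gq q i : ℝ) : ℂ)) * Vᴴ := by
    intro q
    rw [hdiagq q, Matrix.mul_add, Matrix.add_mul]
    unfold depolChoi
    congr 1
    · rw [Matrix.mul_smul, Matrix.smul_mul, Matrix.mul_one, hV1, smul_smul]
    · rw [Matrix.mul_smul, Matrix.smul_mul]
      congr 1
      have hz : V * (Vᴴ * maxEnt d * V) * Vᴴ = maxEnt d := by
        simp only [Matrix.mul_assoc]
        rw [hV1, Matrix.mul_one, ← Matrix.mul_assoc V Vᴴ (maxEnt d), hV1, Matrix.one_mul]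
      rw [← hz, hsm]
  have htens : ∀ q : ℝ, tensorPow (depolChoi d q) u
      = tensorPow V u * Matrix.diagonal (fun i : Fin u → (Fin d × Fin d) =>
          ((∏ k, gq q (i k) : ℝ) : ℂ)) * (tensorPow V u)ᴴ := by
    intro q
    rw [hspec q, tensorPow_mul, tensorPow_mul, tensorPow_conjTranspose, tensorPow_diagonal]
    congr 2
    funext i
    push_cast
    rfl
  have hW1 : tensorPow V u * (tensorPow V u)ᴴ = 1 := by
    rw [← tensorPow_conjTranspose, ← tensorPow_mul, hV1, tensorPow_one]
  have hW2 : (tensorPow V u)ᴴ * tensorPow V u = 1 := by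
    rw [← tensorPow_conjTranspose, ← tensorPow_mul, hV2, tensorPow_one]
  have harr : (![tensorPow (depolChoi d q0) u, tensorPow (depolChoi d q1) u] :
      Fin 2 → Matrix (Fin u → Fin d × Fin d) (Fin u → Fin d × Fin d) ℂ)
      = fun n => tensorPow V u *
          ((![Matrix.diagonal (fun i : Fin u → (Fin d × Fin d) =>
              ((∏ k, gq q0 (i k) : ℝ) : ℂ)),
            Matrix.diagonal (fun i : Fin u → (Fin d × Fin d) =>
              ((∏ k, gq q1 (i k) : ℝ) : ℂ))] : Fin 2 → _) n)
        * (tensorPow V u)ᴴ := by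
    funext n
    fin_cases n
    · simpa using htens q0
    · simpa using htens q1
  rw [harr, helstrom_unitary_conj (tensorPow V u) hW1 hW2]
  have hsumgq : ∀ q : ℝ, ∑ j, gq q j = 1 := by
    intro q
    simp only [hgqdef]
    rw [Finset.sum_add_distrib, Finset.sum_const, ← Finset.mul_sum, htreig,
      Finset.card_univ, Fintype.card_prod, Fintype.card_fin, nsmul_eq_mul]
    push_cast
    field_simp
    ring
  have htrace1 : ∀ q : ℝ, ∑ i : Fin u → Fin d × Fin d, ∏ k, gq q (i k) = 1 := by
    intro q
    have h := Finset.prod_univ_sum (fun _ : Fin u => (Finset.univ : Finset (Fin d × Fin d)))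
      (fun _ j => gq q j)
    rw [Fintype.piFinset_univ] at h
    rw [← h]
    simp [hsumgq q]
  have hdg := helstrom_diagonal (fun i : Fin u → Fin d × Fin d => ∏ k, gq q0 (i k))
    (fun i : Fin u → Fin d × Fin d => ∏ k, gq q1 (i k)) (htrace1 q0) (htrace1 q1)
  beta_reduce at hdg
  rw [hdg]
  -- combinatorics
  have hprodval : ∀ (q : ℝ) (i : Fin u → Fin d × Fin d),
      ∏ k, gq q (i k) = (1 - (1 - 1/(d:ℝ)^2) * q) ^ (∑ k, if i k = i₀ then 1 else 0)
        * (q/(d:ℝ)^2) ^ (u - ∑ k, if i k = i₀ then 1 else 0) := by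
    intro q i
    rw [← Finset.prod_filter_mul_prod_filter_not Finset.univ (fun k => i k = i₀)]
    have hcard : (Finset.univ.filter (fun k => i k = i₀)).card
        = ∑ k, if i k = i₀ then 1 else 0 := Finset.card_filter _ _
    have hv1 : ∀ k ∈ Finset.univ.filter (fun k => i k = i₀),
        gq q (i k) = 1 - (1 - 1/(d:ℝ)^2) * q := by
      intro k hk
      have hik : i k = i₀ := (Finset.mem_filter.mp hk).2
      simp only [hgqdef]
      rw [hik, heig0]
      ring
    have hv2 : ∀ k ∈ Finset.univ.filter (fun k => ¬ i k = i₀),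
        gq q (i k) = q/(d:ℝ)^2 := by
      intro k hk
      have hik : i k ≠ i₀ := (Finset.mem_filter.mp hk).2
      simp only [hgqdef]
      rw [heigne (i k) hik]
      ring
    rw [Finset.prod_congr rfl hv1, Finset.prod_congr rfl hv2, Finset.prod_const,
      Finset.prod_const, hcard]
    congr 2
    have hsplit := Finset.card_filter_add_card_filter_not
      (s := (Finset.univ : Finset (Fin u))) (fun k => i k = i₀)
    rw [Finset.card_univ, Fintype.card_fin] at hsplit
    omega
  have hsumabs : ∑ i : Fin u → Fin d × Fin d,
      |(∏ k, gq q0 (i k)) - (∏ k, gq q1 (i k))|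
      = ∑ j ∈ Finset.range (u+1), (u.choose j : ℝ)
          * ((Fintype.card (Fin d × Fin d) - 1 : ℕ) : ℝ)^(u-j)
          * |(1 - (1 - 1/(d:ℝ)^2) * q0)^j * (q0/(d:ℝ)^2)^(u-j)
             - (1 - (1 - 1/(d:ℝ)^2) * q1)^j * (q1/(d:ℝ)^2)^(u-j)| := by
    have hsc := sum_count i₀ u (fun j => |(1 - (1 - 1/(d:ℝ)^2) * q0)^j * (q0/(d:ℝ)^2)^(u-j)
             - (1 - (1 - 1/(d:ℝ)^2) * q1)^j * (q1/(d:ℝ)^2)^(u-j)|)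
    rw [← hsc]
    refine Finset.sum_congr rfl fun i _ => ?_
    rw [hprodval q0 i, hprodval q1 i]
  have hDm : ((Fintype.card (Fin d × Fin d) - 1 : ℕ) : ℝ) = (d:ℝ)^2 - 1 := by
    rw [Fintype.card_prod, Fintype.card_fin]
    have h4 : 1 ≤ d * d := Nat.one_le_iff_ne_zero.mpr (by positivity)
    rw [Nat.cast_sub h4]
    push_cast
    ring
  rw [hsumabs, fErr]
  have hreflect := Finset.sum_range_reflect (fun k => (u.choose k : ℝ) *
      |((1 - 1/(d:ℝ)^2) * q0)^k * (1-(1 - 1/(d:ℝ)^2) * q0)^(u-k)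
        - ((1 - 1/(d:ℝ)^2) * q1)^k * (1-(1 - 1/(d:ℝ)^2) * q1)^(u-k)|) (u+1)
  rw [← hreflect]
  have hdsq : (0:ℝ) ≤ (d:ℝ)^2 - 1 := by
    have : (2:ℝ) ≤ (d:ℝ) := by exact_mod_cast hd
    nlinarith
  have hDq : ∀ q : ℝ, ((d:ℝ)^2 - 1) * (q/(d:ℝ)^2) = (1 - 1/(d:ℝ)^2) * q := by
    intro q
    field_simp
  have hterm : ∀ j ∈ Finset.range (u+1),
      (u.choose j : ℝ) * ((Fintype.card (Fin d × Fin d) - 1 : ℕ) : ℝ)^(u-j)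
        * |(1 - (1 - 1/(d:ℝ)^2) * q0)^j * (q0/(d:ℝ)^2)^(u-j)
           - (1 - (1 - 1/(d:ℝ)^2) * q1)^j * (q1/(d:ℝ)^2)^(u-j)|
      = (u.choose (u + 1 - 1 - j) : ℝ) *
        |((1 - 1/(d:ℝ)^2) * q0)^(u+1-1-j) * (1-(1 - 1/(d:ℝ)^2) * q0)^(u-(u+1-1-j))
          - ((1 - 1/(d:ℝ)^2) * q1)^(u+1-1-j) * (1-(1 - 1/(d:ℝ)^2) * q1)^(u-(u+1-1-j))| := by
    intro j hj
    rw [Finset.mem_range] at hj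
    have hju : j ≤ u := by omega
    have e1 : u + 1 - 1 - j = u - j := by omega
    have e2 : u - (u - j) = j := Nat.sub_sub_self hju
    rw [e1, e2, Nat.choose_symm hju, hDm]
    have habs : ((d:ℝ)^2-1)^(u-j)
        * |(1 - (1 - 1/(d:ℝ)^2) * q0)^j * (q0/(d:ℝ)^2)^(u-j)
           - (1 - (1 - 1/(d:ℝ)^2) * q1)^j * (q1/(d:ℝ)^2)^(u-j)|
        = |((d:ℝ)^2-1)^(u-j) * ((1 - (1 - 1/(d:ℝ)^2) * q0)^j * (q0/(d:ℝ)^2)^(u-j))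
           - ((d:ℝ)^2-1)^(u-j) * ((1 - (1 - 1/(d:ℝ)^2) * q1)^j * (q1/(d:ℝ)^2)^(u-j))| := by
      rw [← mul_sub, abs_mul, abs_of_nonneg (pow_nonneg hdsq (u-j))]
    rw [mul_assoc]
    congr 1
    rw [habs]
    have hXY : ∀ q : ℝ, ((d:ℝ)^2-1)^(u-j) * ((1 - (1 - 1/(d:ℝ)^2) * q)^j * (q/(d:ℝ)^2)^(u-j))
        = ((1 - 1/(d:ℝ)^2) * q)^(u-j) * (1 - (1 - 1/(d:ℝ)^2) * q)^j := by
      intro q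
      calc ((d:ℝ)^2-1)^(u-j) * ((1 - (1 - 1/(d:ℝ)^2) * q)^j * (q/(d:ℝ)^2)^(u-j))
          = (((d:ℝ)^2-1)^(u-j) * (q/(d:ℝ)^2)^(u-j)) * (1 - (1 - 1/(d:ℝ)^2) * q)^j := by ring
        _ = ((((d:ℝ)^2-1) * (q/(d:ℝ)^2))^(u-j)) * (1 - (1 - 1/(d:ℝ)^2) * q)^j := by
            rw [mul_pow]
        _ = ((1 - 1/(d:ℝ)^2) * q)^(u-j) * (1 - (1 - 1/(d:ℝ)^2) * q)^j := by rw [hDq]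
    rw [hXY q0, hXY q1]
  rw [Finset.sum_congr rfl hterm]
end
end

section
/- Helstrom limit for channel position finding with orthogonal-replacement channel outputs (Lemma 3): Let φ be a rank-one orthogonal projection (pure state) on ℂ^D and let ρ^⊥ be a density matrix on ℂ^D with φ·ρ^⊥ = 0. For q ∈ [0,1] set σ_q = q·ρ^⊥ + (1−q)·φ. Let m ≥ 2 and q_B, q_T ∈ [0,1], and for n = 0,…,m−1 define the density matrix ρ_n = σ_{c_0} ⊗ σ_{c_1} ⊗ … ⊗ σ_{c_{m−1}} on (ℂ^D)^{⊗m}, where c_n = q_T and c_k = q_B for k ≠ n. Then for every u ≥ 1, the Helstrom error probability of the equiprobable states (ρ_n^{⊗u})_{n=0}^{m−1} equals h_m^u(q_B, q_T). -/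
open Matrix BigOperators Finset ComplexOrder

noncomputable section

/-- Tensor product of a family of `m` square matrices. -/
def tensorFam {m : ℕ} {ι : Type*} (σ : Fin m → Matrix ι ι ℂ) :
    Matrix (Fin m → ι) (Fin m → ι) ℂ :=
  fun i j => ∏ k, σ k (i k) (j k)

/-- Hamming weight of a Boolean string. -/
def hamming {u : ℕ} (x : Fin u → Bool) : ℕ :=
  (Finset.univ.filter fun k => x k = true).card

open Classical in
/-- The channel-position-finding error function `h_m^u(qB,qT)`. -/
def hErr (m u : ℕ) (qB qT : ℝ) : ℝ :=
  1 - (1/(m:ℝ)) * ∑ x : Fin m → Fin u → Bool,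
    (let w : Fin m → ℕ := fun ℓ => hamming (x ℓ)
     let W : ℕ := ∑ ℓ, w ℓ
     let ws : ℕ := if qB ≤ qT then Finset.univ.sup w else sInf (Set.range w)
     qT^ws * (1-qT)^(u-ws) * (qB^(W-ws) * (1-qB)^((m-1)*u-(W-ws))))

/-! ### Auxiliary infrastructure -/

set_option linter.unusedSectionVars false

namespace HelstromAux

variable {ι J κ : Type*} [Fintype ι] [Fintype J] [DecidableEq ι] [DecidableEq J]

/-- general tensor product over a fintype -/
def tProd (σ : J → Matrix ι ι ℂ) : Matrix (J → ι) (J → ι) ℂ :=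
  fun i j => ∏ k, σ k (i k) (j k)

lemma tProd_mul (σ τ : J → Matrix ι ι ℂ) :
    tProd σ * tProd τ = tProd (fun j => σ j * τ j) := by
  ext i l
  simp only [tProd, Matrix.mul_apply]
  rw [Finset.prod_univ_sum (fun _ => (univ : Finset ι))
    (fun j c => σ j (i j) c * τ j c (l j)), Fintype.piFinset_univ]
  simp [Finset.prod_mul_distrib]

lemma tProd_trace (σ : J → Matrix ι ι ℂ) :
    (tProd σ).trace = ∏ j, (σ j).trace := by
  simp only [Matrix.trace, Matrix.diag, tProd]
  rw [Finset.prod_univ_sum (fun _ => (univ : Finset ι)) (fun j c => σ j c c),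
    Fintype.piFinset_univ]

lemma tProd_conjTranspose (σ : J → Matrix ι ι ℂ) :
    (tProd σ)ᴴ = tProd (fun j => (σ j)ᴴ) := by
  ext i l
  simp only [tProd, Matrix.conjTranspose_apply]
  exact star_prod _ _

lemma tProd_one : tProd (fun _ : J => (1 : Matrix ι ι ℂ)) = 1 := by
  ext i l
  by_cases h : i = l
  · subst h; simp [tProd, Matrix.one_apply]
  · have : ∃ k, i k ≠ l k := by
      by_contra hc; push_neg at hc; exact h (funext hc)
    obtain ⟨k, hk⟩ := this
    simp only [tProd, Matrix.one_apply, Matrix.one_apply_ne h]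
    exact Finset.prod_eq_zero (mem_univ k) (by simp [hk])

open scoped MatrixOrder in
lemma psd_exists_sqrt {A : Matrix ι ι ℂ} (hA : A.PosSemidef) :
    ∃ S : Matrix ι ι ℂ, Sᴴ = S ∧ S * S = A :=
  ⟨CFC.sqrt A, (CFC.sqrt_nonneg A).posSemidef.1, CFC.sqrt_mul_sqrt_self A hA.nonneg⟩

lemma tProd_posSemidef {σ : J → Matrix ι ι ℂ} (h : ∀ j, (σ j).PosSemidef) :
    (tProd σ).PosSemidef := by
  choose S hS using fun j => psd_exists_sqrt (h j)
  have e : (fun j => (S j)ᴴ * S j) = σ := funext fun j => by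
    rw [(hS j).1, (hS j).2]
  have : tProd σ = (tProd fun j => S j)ᴴ * (tProd fun j => S j) := by
    rw [tProd_conjTranspose, tProd_mul, e]
  rw [this]
  exact Matrix.posSemidef_conjTranspose_mul_self _

lemma tProd_sum [Fintype κ] (f : J → κ → Matrix ι ι ℂ) :
    tProd (fun j => ∑ b : κ, f j b) = ∑ g : J → κ, tProd (fun j => f j (g j)) := by
  ext i l
  simp only [tProd, Matrix.sum_apply]
  rw [Finset.prod_univ_sum (fun _ => (univ : Finset κ)) (fun j b => f j b (i j) (l j)),
    Fintype.piFinset_univ]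

lemma tProd_smul (c : J → ℂ) (A : J → Matrix ι ι ℂ) :
    tProd (fun j => c j • A j) = (∏ j, c j) • tProd A := by
  ext i l
  simp [tProd, Finset.prod_mul_distrib]

/-- expansion of a tensor product of sums of scaled matrices -/
lemma tProd_expand [Fintype κ] (c : J → κ → ℂ) (g : J → κ → Matrix ι ι ℂ) :
    tProd (fun j => ∑ b : κ, c j b • g j b)
      = ∑ x : J → κ, (∏ j, c j (x j)) • tProd (fun j => g j (x j)) := by
  rw [tProd_sum]
  exact Finset.sum_congr rfl fun x _ => tProd_smul _ _

lemma trace_re_nonneg {C : Matrix ι ι ℂ} (hC : C.PosSemidef) : 0 ≤ C.trace.re := by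
  have : C.trace.re = ∑ i, (C i i).re := by
    simp [Matrix.trace, Matrix.diag, Complex.re_sum]
  rw [this]
  refine Finset.sum_nonneg fun i _ => ?_
  have := hC.re_dotProduct_nonneg (Pi.single i 1)
  simpa [dotProduct, Matrix.mulVec, Pi.single_apply, Finset.sum_ite_eq,
    Finset.sum_ite_eq'] using this

lemma trace_mul_re_nonneg {A B : Matrix ι ι ℂ} (hA : A.PosSemidef) (hB : B.PosSemidef) :
    0 ≤ ((A * B).trace).re := by
  obtain ⟨S, hS1, hS2⟩ := psd_exists_sqrt hB
  have h2 : (A * B).trace = (Sᴴ * A * S).trace := by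
    calc (A * B).trace = (A * (S * S)).trace := by rw [hS2]
      _ = (S * (A * S)).trace := by
            rw [← Matrix.mul_assoc, Matrix.trace_mul_comm]
      _ = (Sᴴ * A * S).trace := by
            rw [hS1, Matrix.mul_assoc]
  rw [h2]
  exact trace_re_nonneg (hA.conjTranspose_mul_mul_same _)

lemma posSemidef_add {A B : Matrix ι ι ℂ} (hA : A.PosSemidef) (hB : B.PosSemidef) :
    (A + B).PosSemidef := by
  exact hA.add hB

lemma posSemidef_sum {α : Type*} {s : Finset α} {f : α → Matrix ι ι ℂ}
    (h : ∀ a ∈ s, (f a).PosSemidef) : (∑ a ∈ s, f a).PosSemidef := by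
  classical
  induction s using Finset.induction_on with
  | empty => simpa using Matrix.PosSemidef.zero
  | insert a s hni ih =>
      rw [Finset.sum_insert hni]
      exact posSemidef_add (h _ (mem_insert_self _ _))
        (ih fun a ha => h a (mem_insert_of_mem ha))

/-- the closed-form probability term -/
def fterm (qB qT : ℝ) (m u W v : ℕ) : ℝ :=
  qT^v * (1-qT)^(u-v) * (qB^(W-v) * (1-qB)^((m-1)*u-(W-v)))

lemma fterm_mono_le (qB qT : ℝ) (hB0 : 0 ≤ qB) (hB1 : qB ≤ 1) (hT0 : 0 ≤ qT) (hT1 : qT ≤ 1)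
    {m u W a b : ℕ} (hq : qB ≤ qT) (hab : a ≤ b) (hbu : b ≤ u) (hbW : b ≤ W)
    (hWa : W - a ≤ (m-1)*u) :
    fterm qB qT m u W a ≤ fterm qB qT m u W b := by
  obtain ⟨d, rfl⟩ : ∃ d, b = a + d := ⟨b - a, by omega⟩
  have key : (qB*(1-qT))^d ≤ (qT*(1-qB))^d :=
    pow_le_pow_left₀ (by nlinarith) (by nlinarith) d
  have hA : 0 ≤ qT^a * (1-qT)^(u-(a+d)) * (qB^(W-(a+d)) * (1-qB)^((m-1)*u - (W-a))) :=
    mul_nonneg (mul_nonneg (pow_nonneg hT0 _) (pow_nonneg (by linarith) _))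
      (mul_nonneg (pow_nonneg hB0 _) (pow_nonneg (by linarith) _))
  calc fterm qB qT m u W a
      = (qT^a * (1-qT)^(u-(a+d)) * (qB^(W-(a+d)) * (1-qB)^((m-1)*u - (W-a)))) *
          (qB*(1-qT))^d := by
        rw [fterm, show u - a = (u - (a+d)) + d by omega,
          show W - a = (W - (a+d)) + d by omega, pow_add, pow_add, mul_pow]
        ring
    _ ≤ (qT^a * (1-qT)^(u-(a+d)) * (qB^(W-(a+d)) * (1-qB)^((m-1)*u - (W-a)))) *
          (qT*(1-qB))^d := mul_le_mul_of_nonneg_left key hA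
    _ = fterm qB qT m u W (a+d) := by
        rw [fterm, show (m-1)*u - (W - (a+d)) = ((m-1)*u - (W-a)) + d by omega,
          pow_add qT a d, pow_add, mul_pow]
        ring

lemma fterm_mono_ge (qB qT : ℝ) (hB0 : 0 ≤ qB) (hB1 : qB ≤ 1) (hT0 : 0 ≤ qT) (hT1 : qT ≤ 1)
    {m u W a b : ℕ} (hq : qT ≤ qB) (hba : b ≤ a) (hau : a ≤ u) (haW : a ≤ W)
    (hWb : W - b ≤ (m-1)*u) :
    fterm qB qT m u W a ≤ fterm qB qT m u W b := by
  obtain ⟨d, rfl⟩ : ∃ d, a = b + d := ⟨a - b, by omega⟩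
  have key : (qT*(1-qB))^d ≤ (qB*(1-qT))^d :=
    pow_le_pow_left₀ (by nlinarith) (by nlinarith) d
  have hA : 0 ≤ qT^b * (1-qT)^(u-(b+d)) * (qB^(W-(b+d)) * (1-qB)^((m-1)*u - (W-b))) :=
    mul_nonneg (mul_nonneg (pow_nonneg hT0 _) (pow_nonneg (by linarith) _))
      (mul_nonneg (pow_nonneg hB0 _) (pow_nonneg (by linarith) _))
  calc fterm qB qT m u W (b+d)
      = (qT^b * (1-qT)^(u-(b+d)) * (qB^(W-(b+d)) * (1-qB)^((m-1)*u - (W-b)))) *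
          (qT*(1-qB))^d := by
        rw [fterm, show (m-1)*u - (W - (b+d)) = ((m-1)*u - (W-b)) + d by omega,
          pow_add qT b d, pow_add, mul_pow]
        ring
    _ ≤ (qT^b * (1-qT)^(u-(b+d)) * (qB^(W-(b+d)) * (1-qB)^((m-1)*u - (W-b)))) *
          (qB*(1-qT))^d := mul_le_mul_of_nonneg_left key hA
    _ = fterm qB qT m u W b := by
        rw [fterm, show u - b = (u - (b+d)) + d by omega,
          show W - b = (W - (b+d)) + d by omega, pow_add, pow_add, mul_pow]
        ring

lemma hamming_le {u : ℕ} (y : Fin u → Bool) : hamming y ≤ u := by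
  simpa [hamming] using (Finset.card_filter_le (univ : Finset (Fin u)) fun k => y k = true)

lemma prod_ite_weight (q : ℝ) {u : ℕ} (y : Fin u → Bool) :
    (∏ k, (if y k then q else 1 - q)) = q ^ hamming y * (1-q)^(u - hamming y) := by
  rw [Finset.prod_ite]
  have hc : (univ.filter fun k => ¬ (y k = true)).card = u - hamming y := by
    have := Finset.card_filter_add_card_filter_not
      (s := (univ : Finset (Fin u))) (p := fun k => y k = true)
    simp only [Finset.card_univ, Fintype.card_fin] at this
    unfold hamming; omega
  simp only [Finset.prod_const, hc, hamming]

/-- weight of block ℓ -/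
def wb {m u : ℕ} (x : Fin u → Fin m → Bool) (ℓ : Fin m) : ℕ := hamming (fun k => x k ℓ)

lemma pReal_closed (qB qT : ℝ) {m u : ℕ} (x : Fin u → Fin m → Bool) (n : Fin m) :
    (∏ k : Fin u, ∏ ℓ : Fin m, (if x k ℓ then (if ℓ = n then qT else qB)
        else 1 - (if ℓ = n then qT else qB)))
      = fterm qB qT m u (∑ ℓ, wb x ℓ) (wb x n) := by
  rw [Finset.prod_comm]
  have h1 : ∀ ℓ : Fin m, (∏ k : Fin u, (if x k ℓ then (if ℓ = n then qT else qB)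
      else 1 - (if ℓ = n then qT else qB)))
      = (if ℓ = n then qT else qB) ^ wb x ℓ
        * (1 - (if ℓ = n then qT else qB)) ^ (u - wb x ℓ) :=
    fun ℓ => prod_ite_weight _ (fun k => x k ℓ)
  rw [Finset.prod_congr rfl fun ℓ _ => h1 ℓ]
  rw [← Finset.mul_prod_erase univ _ (mem_univ n)]
  have h2 : (∏ ℓ ∈ univ.erase n, (if ℓ = n then qT else qB) ^ wb x ℓ
      * (1 - (if ℓ = n then qT else qB)) ^ (u - wb x ℓ))
      = ∏ ℓ ∈ univ.erase n, qB ^ wb x ℓ * (1 - qB) ^ (u - wb x ℓ) := by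
    refine Finset.prod_congr rfl fun ℓ hℓ => ?_
    rw [if_neg (Finset.ne_of_mem_erase hℓ)]
  rw [h2, if_pos rfl, Finset.prod_mul_distrib, Finset.prod_pow_eq_pow_sum,
    Finset.prod_pow_eq_pow_sum]
  have hW : wb x n + ∑ ℓ ∈ univ.erase n, wb x ℓ = ∑ ℓ, wb x ℓ :=
    Finset.add_sum_erase univ (wb x) (mem_univ n)
  have hwu : ∀ ℓ, wb x ℓ ≤ u := fun ℓ => hamming_le _
  have hcard : (univ.erase n).card = m - 1 := by
    rw [Finset.card_erase_of_mem (mem_univ n), Finset.card_univ, Fintype.card_fin]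
  have hsum2 : ∑ ℓ ∈ univ.erase n, (u - wb x ℓ) + ∑ ℓ ∈ univ.erase n, wb x ℓ
      = (m-1) * u := by
    rw [← Finset.sum_add_distrib]
    have : ∀ ℓ ∈ univ.erase n, (u - wb x ℓ) + wb x ℓ = u := fun ℓ _ => by
      have := hwu ℓ; omega
    rw [Finset.sum_congr rfl this, Finset.sum_const, hcard, smul_eq_mul]
  have e1 : ∑ ℓ ∈ univ.erase n, wb x ℓ = (∑ ℓ, wb x ℓ) - wb x n := by omega
  have e2 : ∑ ℓ ∈ univ.erase n, (u - wb x ℓ)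
      = (m-1)*u - ((∑ ℓ, wb x ℓ) - wb x n) := by omega
  rw [e1, e2, fterm]

lemma wb_sum_le {m u : ℕ} (x : Fin u → Fin m → Bool) (s : Finset (Fin m)) :
    ∑ ℓ ∈ s, wb x ℓ ≤ s.card * u := by
  calc ∑ ℓ ∈ s, wb x ℓ ≤ ∑ _ℓ ∈ s, u := Finset.sum_le_sum fun ℓ _ => hamming_le _
    _ = s.card * u := by rw [Finset.sum_const, smul_eq_mul]

end HelstromAux
set_option maxHeartbeats 1000000 in
open HelstromAux in
/-- Helstrom limit for channel position finding with orthogonal-replacement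
channel outputs (Lemma 3). -/
theorem helstrom_CPF_orc {D : ℕ} (φ ρp : Matrix (Fin D) (Fin D) ℂ)
    (hherm : φᴴ = φ) (hproj : φ * φ = φ) (htr : φ.trace = 1)
    (hρp : IsDensityMatrix ρp) (horth : φ * ρp = 0)
    (m : ℕ) (hm : 2 ≤ m) (qB qT : ℝ)
    (hB : qB ∈ Set.Icc (0:ℝ) 1) (hT : qT ∈ Set.Icc (0:ℝ) 1)
    (u : ℕ) (hu : 1 ≤ u) :
    helstrom (fun n : Fin m => tensorPow (tensorFam (fun k =>
        if k = n then (qT:ℂ) • ρp + (((1-qT : ℝ)):ℂ) • φ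
        else (qB:ℂ) • ρp + (((1-qB : ℝ)):ℂ) • φ)) u)
      (fun _ => 1/(m:ℝ)) = hErr m u qB qT := by
  obtain ⟨hB0, hB1⟩ := hB
  obtain ⟨hT0, hT1⟩ := hT
  obtain ⟨hρPSD, hρtr⟩ := hρp
  haveI : Nonempty (Fin m) := ⟨⟨0, by omega⟩⟩
  have hφPSD : φ.PosSemidef := by
    have h : φ = φᴴ * φ := by rw [hherm, hproj]
    rw [h]; exact Matrix.posSemidef_conjTranspose_mul_self φ
  have hφ1PSD : ((1 : Matrix (Fin D) (Fin D) ℂ) - φ).PosSemidef := by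
    have h : (1 : Matrix (Fin D) (Fin D) ℂ) - φ = (1 - φ)ᴴ * (1 - φ) := by
      have h2 : ((1 : Matrix (Fin D) (Fin D) ℂ) - φ) * (1 - φ) = 1 - φ := by
        rw [Matrix.mul_sub, Matrix.mul_one, Matrix.sub_mul, Matrix.one_mul, hproj]
        simp
      rw [Matrix.conjTranspose_sub, Matrix.conjTranspose_one, hherm, h2]
    rw [h]; exact Matrix.posSemidef_conjTranspose_mul_self _
  -- abbreviations
  set cR : Fin m → Fin m → ℝ := fun n ℓ => if ℓ = n then qT else qB with hcR
  set σM : Fin m → Fin m → Matrix (Fin D) (Fin D) ℂ :=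
    fun n ℓ => ((cR n ℓ : ℝ) : ℂ) • ρp + (((1 - cR n ℓ : ℝ)) : ℂ) • φ with hσM
  have hρstate : ∀ n : Fin m, tensorPow (tensorFam (fun k =>
      if k = n then (qT:ℂ) • ρp + (((1-qT : ℝ)):ℂ) • φ
      else (qB:ℂ) • ρp + (((1-qB : ℝ)):ℂ) • φ)) u
      = tProd (fun _ : Fin u => tProd (σM n)) := by
    intro n
    have h : (fun k => if k = n then (qT:ℂ) • ρp + (((1-qT : ℝ)):ℂ) • φ
        else (qB:ℂ) • ρp + (((1-qB : ℝ)):ℂ) • φ) = σM n := by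
      funext ℓ; by_cases h : ℓ = n <;> simp [hσM, hcR, h]
    rw [h]; rfl
  set base : Bool → Matrix (Fin D) (Fin D) ℂ := fun b => if b then ρp else φ with hbase
  set eM : Bool → Matrix (Fin D) (Fin D) ℂ := fun b => if b then 1 - φ else φ with heM
  set Φ : (Fin u → Fin m → Bool) → Matrix (Fin u → Fin m → Fin D) (Fin u → Fin m → Fin D) ℂ :=
    fun x => tProd (fun k => tProd (fun ℓ => base (x k ℓ))) with hΦ
  set Q : (Fin u → Fin m → Bool) → Matrix (Fin u → Fin m → Fin D) (Fin u → Fin m → Fin D) ℂ :=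
    fun x => tProd (fun k => tProd (fun ℓ => eM (x k ℓ))) with hQ
  set pR : Fin m → (Fin u → Fin m → Bool) → ℝ :=
    fun n x => ∏ k, ∏ ℓ, (if x k ℓ then cR n ℓ else 1 - cR n ℓ) with hpR
  -- component trace computation
  have htrρ : ∀ (c : ℝ) (b : Bool), ((if b then (1 : Matrix (Fin D) (Fin D) ℂ) - φ else φ) *
      ((c : ℂ) • ρp + ((1 - c : ℝ) : ℂ) • φ)).trace
      = (((if b then c else 1 - c : ℝ)) : ℂ) := by
    intro c b
    have hφσ : (φ * ((c : ℂ) • ρp + ((1 - c : ℝ) : ℂ) • φ)).trace = ((1 - c : ℝ) : ℂ) := by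
      rw [Matrix.mul_add, Matrix.mul_smul, Matrix.mul_smul, horth, hproj]
      simp [htr]
    have hσtr : (((c : ℂ) • ρp + ((1 - c : ℝ) : ℂ) • φ)).trace = 1 := by
      rw [Matrix.trace_add, Matrix.trace_smul, Matrix.trace_smul, hρtr, htr]
      simp only [smul_eq_mul, mul_one]
      push_cast; ring
    cases b
    · simpa using hφσ
    · simp only [if_true]
      rw [Matrix.sub_mul, one_mul, Matrix.trace_sub, hσtr, hφσ]
      push_cast; ring
  -- trace of Q against the states
  have hQρ : ∀ (n : Fin m) x,
      ((Q x * tProd (fun _ : Fin u => tProd (σM n))).trace) = ((pR n x : ℝ) : ℂ) := by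
    intro n x
    calc (Q x * tProd (fun _ : Fin u => tProd (σM n))).trace
        = ∏ k, ∏ ℓ, ((eM (x k ℓ)) * σM n ℓ).trace := by
          simp only [hQ]
          rw [tProd_mul, tProd_trace]
          exact Finset.prod_congr rfl fun k _ => by rw [tProd_mul, tProd_trace]
      _ = ∏ k, ∏ ℓ, (((if x k ℓ then cR n ℓ else 1 - cR n ℓ : ℝ)) : ℂ) := by
          refine Finset.prod_congr rfl fun k _ => Finset.prod_congr rfl fun ℓ _ => ?_
          have h := htrρ (cR n ℓ) (x k ℓ)
          simp only [hσM, heM]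
          cases hxy : x k ℓ <;> simpa [hxy] using htrρ (cR n ℓ) (x k ℓ)
      _ = ((pR n x : ℝ) : ℂ) := by
          simp only [hpR]; push_cast; rfl
  -- decomposition of the states
  have hdecomp : ∀ n : Fin m, tProd (fun _ : Fin u => tProd (σM n))
      = ∑ x : Fin u → Fin m → Bool, ((pR n x : ℝ) : ℂ) • Φ x := by
    intro n
    have hinner : tProd (σM n) = ∑ y : Fin m → Bool,
        (∏ ℓ, (((if y ℓ then cR n ℓ else 1 - cR n ℓ : ℝ)) : ℂ)) •
          tProd (fun ℓ => base (y ℓ)) := by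
      have hσ : σM n = fun ℓ => ∑ b : Bool,
          (((if b then cR n ℓ else 1 - cR n ℓ : ℝ)) : ℂ) • base b := by
        funext ℓ
        rw [Fintype.sum_bool]
        simp [hσM, hbase]
      rw [hσ]
      exact tProd_expand _ _
    calc tProd (fun _ : Fin u => tProd (σM n))
        = tProd (fun _ : Fin u => ∑ y : Fin m → Bool,
            (∏ ℓ, (((if y ℓ then cR n ℓ else 1 - cR n ℓ : ℝ)) : ℂ)) •
              tProd (fun ℓ => base (y ℓ))) := by rw [hinner]
      _ = ∑ x : Fin u → Fin m → Bool,
            (∏ k, ∏ ℓ, (((if x k ℓ then cR n ℓ else 1 - cR n ℓ : ℝ)) : ℂ)) •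
              tProd (fun k => tProd (fun ℓ => base (x k ℓ))) := tProd_expand _ _
      _ = ∑ x : Fin u → Fin m → Bool, ((pR n x : ℝ) : ℂ) • Φ x := by
            refine Finset.sum_congr rfl fun x _ => ?_
            simp only [hΦ]
            congr 1
            simp only [hpR]; push_cast; rfl
  -- PSD and traces
  have hbasePSD : ∀ b, (base b).PosSemidef := by
    intro b; cases b <;> simp [hbase, hφPSD, hρPSD]
  have heMPSD : ∀ b, (eM b).PosSemidef := by
    intro b; cases b <;> simp [heM, hφPSD, hφ1PSD]
  have hΦPSD : ∀ x, (Φ x).PosSemidef := fun x =>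
    tProd_posSemidef fun k => tProd_posSemidef fun ℓ => hbasePSD _
  have hΦtr : ∀ x, (Φ x).trace = 1 := by
    intro x
    simp only [hΦ]
    rw [tProd_trace, Finset.prod_congr rfl fun k _ => tProd_trace _]
    have h : ∀ b, (base b).trace = 1 := by intro b; cases b <;> simp [hbase, hρtr, htr]
    simp [h]
  have hQPSD : ∀ x, (Q x).PosSemidef := fun x =>
    tProd_posSemidef fun k => tProd_posSemidef fun ℓ => heMPSD _
  have hQsum : ∑ x : Fin u → Fin m → Bool, Q x = 1 := by
    have h1 : ∑ y : Fin m → Bool, tProd (fun ℓ => eM (y ℓ)) = 1 := by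
      rw [← tProd_sum]
      have h : (fun ℓ : Fin m => ∑ b : Bool, eM b)
          = fun _ : Fin m => (1 : Matrix (Fin D) (Fin D) ℂ) := by
        funext ℓ; rw [Fintype.sum_bool]; simp [heM]
      rw [h, tProd_one]
    have h2 := tProd_sum (J := Fin u) (ι := Fin m → Fin D) (κ := Fin m → Bool)
      (fun _ y => tProd (ι := Fin D) (fun ℓ => eM (y ℓ)))
    simp only [h1, tProd_one] at h2
    simp only [hQ]
    exact h2.symm
  -- combinatorics
  set W : (Fin u → Fin m → Bool) → ℕ := fun x => ∑ ℓ, wb x ℓ with hWdef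
  set ws : (Fin u → Fin m → Bool) → ℕ := fun x =>
    if qB ≤ qT then Finset.univ.sup (wb x) else sInf (Set.range (wb x)) with hwsdef
  have hws_ex : ∀ x, ∃ n, wb x n = ws x := by
    intro x
    by_cases hq : qB ≤ qT
    · obtain ⟨ℓ, -, h⟩ := Finset.exists_mem_eq_sup univ univ_nonempty (wb x)
      refine ⟨ℓ, ?_⟩
      simp only [hwsdef, if_pos hq]
      exact h.symm
    · obtain ⟨ℓ, h⟩ := Nat.sInf_mem (Set.range_nonempty (wb x))
      refine ⟨ℓ, ?_⟩
      simp only [hwsdef, if_neg hq]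
      exact h
  have hpclosed : ∀ (n : Fin m) x, pR n x = fterm qB qT m u (W x) (wb x n) := by
    intro n x
    simp only [hpR, hcR, hWdef]
    exact pReal_closed qB qT x n
  have hwbu : ∀ x (n : Fin m), wb x n ≤ u := fun x n => hamming_le _
  have hws_u : ∀ x, ws x ≤ u := fun x => by
    obtain ⟨n, h⟩ := hws_ex x; rw [← h]; exact hwbu x n
  have hwbW : ∀ x (n : Fin m), wb x n ≤ W x := by
    intro x n
    simp only [hWdef]
    exact Finset.single_le_sum (fun ℓ _ => Nat.zero_le _) (mem_univ n)
  have hws_W : ∀ x, ws x ≤ W x := fun x => by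
    obtain ⟨n, h⟩ := hws_ex x; rw [← h]; exact hwbW x n
  have hWerase : ∀ x (n : Fin m), W x - wb x n ≤ (m-1)*u := by
    intro x n
    have h1 : wb x n + ∑ ℓ ∈ univ.erase n, wb x ℓ = W x := by
      simp only [hWdef]
      exact Finset.add_sum_erase univ (wb x) (mem_univ n)
    have h2 := wb_sum_le x (univ.erase n)
    have h3 : (univ.erase n).card = m - 1 := by
      rw [Finset.card_erase_of_mem (mem_univ n), Finset.card_univ, Fintype.card_fin]
    rw [h3] at h2
    omega
  have hterm_ge : ∀ x (n : Fin m), pR n x ≤ fterm qB qT m u (W x) (ws x) := by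
    intro x n
    rw [hpclosed n x]
    by_cases hq : qB ≤ qT
    · refine fterm_mono_le qB qT hB0 hB1 hT0 hT1 hq ?_ (hws_u x) (hws_W x) (hWerase x n)
      simp only [hwsdef, if_pos hq]
      exact Finset.le_sup (mem_univ n)
    · obtain ⟨n0, hn0⟩ := hws_ex x
      refine fterm_mono_ge qB qT hB0 hB1 hT0 hT1 (le_of_not_ge hq) ?_ (hwbu x n)
        (hwbW x n) ?_
      · simp only [hwsdef, if_neg hq]
        exact Nat.sInf_le ⟨n, rfl⟩
      · rw [← hn0]; exact hWerase x n0
  -- the optimal POVM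
  have hguess_ex : ∀ x : Fin u → Fin m → Bool, ∃ n, wb x n = ws x := hws_ex
  set guess : (Fin u → Fin m → Bool) → Fin m := fun x => (hguess_ex x).choose with hguess
  have hguess_spec : ∀ x, wb x (guess x) = ws x := fun x => (hguess_ex x).choose_spec
  set Mop : Fin m → Matrix (Fin u → Fin m → Fin D) (Fin u → Fin m → Fin D) ℂ :=
    fun n => ∑ x ∈ univ.filter (fun x => guess x = n), Q x with hMop
  have hMopPSD : ∀ n, (Mop n).PosSemidef := fun n => posSemidef_sum (fun x _ => hQPSD x)
  have hMopsum : ∑ n, Mop n = 1 := by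
    simp only [hMop]
    exact (Finset.sum_fiberwise univ guess Q).trans hQsum
  set V : ℝ := (1/(m:ℝ)) * ∑ x : Fin u → Fin m → Bool, fterm qB qT m u (W x) (ws x) with hV
  have hVval : ∑ n, (1/(m:ℝ)) *
      ((Mop n * tProd (fun _ : Fin u => tProd (σM n))).trace).re = V := by
    have h1 : ∀ n, ((Mop n * tProd (fun _ : Fin u => tProd (σM n))).trace).re
        = ∑ x ∈ univ.filter (fun x => guess x = n), pR n x := by
      intro n
      simp only [hMop]
      rw [Finset.sum_mul, Matrix.trace_sum, Complex.re_sum]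
      refine Finset.sum_congr rfl fun x hx => ?_
      rw [hQρ n x]
      exact Complex.ofReal_re _
    calc ∑ n, (1/(m:ℝ)) * ((Mop n * tProd (fun _ : Fin u => tProd (σM n))).trace).re
        = (1/(m:ℝ)) * ∑ n, ∑ x ∈ univ.filter (fun x => guess x = n), pR n x := by
          rw [← Finset.mul_sum]
          congr 1
          exact Finset.sum_congr rfl fun n _ => h1 n
      _ = (1/(m:ℝ)) * ∑ n, ∑ x ∈ univ.filter (fun x => guess x = n),
            fterm qB qT m u (W x) (ws x) := by
          congr 1
          refine Finset.sum_congr rfl fun n _ => Finset.sum_congr rfl fun x hx => ?_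
          have hxg : guess x = n := by simpa using (Finset.mem_filter.mp hx).2
          rw [← hxg, hpclosed (guess x) x, hguess_spec x]
      _ = V := by
          rw [hV]
          congr 1
          exact Finset.sum_fiberwise univ guess _
  -- upper bound for arbitrary POVMs
  have hub : ∀ (M : Fin m → Matrix (Fin u → Fin m → Fin D) (Fin u → Fin m → Fin D) ℂ),
      (∀ n, (M n).PosSemidef) → (∑ n, M n) = 1 →
      ∑ n, (1/(m:ℝ)) * ((M n * tProd (fun _ : Fin u => tProd (σM n))).trace).re ≤ V := by
    intro M hMPSD hMsum
    have hsum1 : ∀ x, ∑ n, ((M n * Φ x).trace).re = 1 := by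
      intro x
      rw [← Complex.re_sum]
      have h2 : ∑ n, (M n * Φ x).trace = 1 := by
        rw [← Matrix.trace_sum, ← Finset.sum_mul, hMsum, one_mul, hΦtr x]
      rw [h2]
      exact Complex.one_re
    have htn : ∀ (n : Fin m) x, 0 ≤ ((M n * Φ x).trace).re := fun n x =>
      trace_mul_re_nonneg (hMPSD n) (hΦPSD x)
    have hMtr : ∀ n, ((M n * tProd (fun _ : Fin u => tProd (σM n))).trace).re
        = ∑ x : Fin u → Fin m → Bool, pR n x * ((M n * Φ x).trace).re := by
      intro n
      rw [hdecomp n, Matrix.mul_sum, Matrix.trace_sum, Complex.re_sum]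
      refine Finset.sum_congr rfl fun x _ => ?_
      rw [Matrix.mul_smul, Matrix.trace_smul, smul_eq_mul]
      simp [Complex.mul_re]
    calc ∑ n, (1/(m:ℝ)) * ((M n * tProd (fun _ : Fin u => tProd (σM n))).trace).re
        = (1/(m:ℝ)) * ∑ x : Fin u → Fin m → Bool,
            ∑ n, pR n x * ((M n * Φ x).trace).re := by
          rw [← Finset.mul_sum]
          congr 1
          rw [Finset.sum_comm]
          exact Finset.sum_congr rfl fun n _ => hMtr n
      _ ≤ (1/(m:ℝ)) * ∑ x : Fin u → Fin m → Bool, fterm qB qT m u (W x) (ws x) := by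
          refine mul_le_mul_of_nonneg_left (Finset.sum_le_sum fun x _ => ?_) (by positivity)
          calc ∑ n, pR n x * ((M n * Φ x).trace).re
              ≤ ∑ n, fterm qB qT m u (W x) (ws x) * ((M n * Φ x).trace).re :=
                Finset.sum_le_sum fun n _ =>
                  mul_le_mul_of_nonneg_right (hterm_ge x n) (htn n x)
            _ = fterm qB qT m u (W x) (ws x) * ∑ n, ((M n * Φ x).trace).re := by
                rw [← Finset.mul_sum]
            _ = fterm qB qT m u (W x) (ws x) := by rw [hsum1 x, mul_one]
      _ = V := hV.symm
  -- put it together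
  unfold helstrom
  simp only []
  simp only [hρstate]
  have hSup : sSup {x : ℝ | ∃ M : Fin m → Matrix (Fin u → Fin m → Fin D) (Fin u → Fin m → Fin D) ℂ,
      (∀ n, (M n).PosSemidef) ∧ (∑ n, M n) = 1 ∧
      x = ∑ n, (1/(m:ℝ)) * ((M n * tProd (fun _ : Fin u => tProd (σM n))).trace).re} = V := by
    apply le_antisymm
    · refine csSup_le ⟨V, Mop, hMopPSD, hMopsum, hVval.symm⟩ ?_
      rintro y ⟨M, h1, h2, rfl⟩
      exact hub M h1 h2
    · refine le_csSup ⟨V, ?_⟩ ⟨Mop, hMopPSD, hMopsum, hVval.symm⟩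
      rintro y ⟨M, h1, h2, rfl⟩
      exact hub M h1 h2
  rw [hSup, hV]
  -- final combinatorial identification with hErr
  unfold hErr
  congr 1
  congr 1
  refine Fintype.sum_equiv
    (⟨fun x ℓ k => x k ℓ, fun x k ℓ => x ℓ k, fun _ => rfl, fun _ => rfl⟩ :
      (Fin u → Fin m → Bool) ≃ (Fin m → Fin u → Bool)) _ _ ?_
  intro x
  simp only [Equiv.coe_fn_mk]
  by_cases hq : qB ≤ qT <;>
    [skip; skip] <;>
    first
    | (simp only [hwsdef, hWdef, fterm, wb, hamming, if_pos, if_neg, hq, if_true, if_false]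
       rfl)
    | rfl
end
end
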